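/- arXiv:1208.3540 — 4 statements merged into one kernel-verified Lean document; each statement's English description precedes it below -/
import Mathlib

section
/- Fix an integer j ≥ 2. Define two permutations u, v in the symmetric group S_n (regarded as words a_1 a_2 ⋯ a_n in one-line notation) to be j-equivalent if v can be obtained from u by a sequence of interchanges of adjacent entries whose values differ by at least j. Then the number f_j(n) of equivalence classes of this equivalence relation equals n! if n ≤ j, and equals j!·j^{n−j} if n > j. -/
/-- One interchange of two adjacent entries of a word whose values differ by at least `j`. -/
def AdjSwapGe (j : ℕ) (u v : List ℕ) : Prop :=
  ∃ (p q : List ℕ) (x y : ℕ), j ≤ ((x : ℤ) - (y : ℤ)).natAbs ∧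
    u = p ++ x :: y :: q ∧ v = p ++ y :: x :: q

/-- The number of equivalence classes, under the equivalence relation generated by `r`,
of words belonging to an `r`-closed set `W` of words. -/
noncomputable def numClasses (r : List ℕ → List ℕ → Prop) (W : Set (List ℕ)) : ℕ :=
  Set.ncard {C : Set (List ℕ) | ∃ w ∈ W, C = {v | Relation.EqvGen r w v}}

namespace JEquiv

abbrev Bef (w : List ℕ) (x y : ℕ) : Prop := [x, y].Sublist w

lemma bef_mem_left {w : List ℕ} {x y : ℕ} (h : Bef w x y) : x ∈ w :=
  h.subset (by simp)

lemma bef_mem_right {w : List ℕ} {x y : ℕ} (h : Bef w x y) : y ∈ w :=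
  h.subset (by simp)

lemma pair_cons {z : ℕ} {t : List ℕ} {a b : ℕ} :
    Bef (z :: t) a b ↔ (a = z ∧ b ∈ t) ∨ Bef t a b := by
  constructor
  · intro h
    cases h with
    | cons _ h => exact Or.inr h
    | cons_cons _ h => exact Or.inl ⟨rfl, List.singleton_sublist.mp h⟩
  · rintro (⟨rfl, hb⟩ | h)
    · exact (List.singleton_sublist.mpr hb).cons₂ _
    · exact h.cons _

lemma pair_append {s t : List ℕ} {a b : ℕ} :
    Bef (s ++ t) a b ↔ Bef s a b ∨ (a ∈ s ∧ b ∈ t) ∨ Bef t a b := by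
  constructor
  · intro h
    rcases List.sublist_append_iff.mp h with ⟨l₁, l₂, he, h₁, h₂⟩
    match l₁, l₂, he with
    | [], l₂, he =>
      right; right
      simp only [List.nil_append] at he
      rwa [← he] at h₂
    | [c], l₂, he =>
      simp only [List.cons_append, List.nil_append, List.cons.injEq] at he
      obtain ⟨rfl, he2⟩ := he
      right; left
      exact ⟨List.singleton_sublist.mp h₁,
        List.singleton_sublist.mp (by rwa [← he2] at h₂)⟩
    | c :: d :: l, l₂, he =>
      simp only [List.cons_append, List.cons.injEq] at he
      obtain ⟨rfl, rfl, he3⟩ := he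
      obtain ⟨rfl, rfl⟩ := List.append_eq_nil_iff.mp he3.symm
      exact Or.inl h₁
  · rintro (h | ⟨ha, hb⟩ | h)
    · exact h.trans (List.sublist_append_left s t)
    · exact List.Sublist.append (List.singleton_sublist.mpr ha)
        (List.singleton_sublist.mpr hb)
    · exact h.trans (List.sublist_append_right s t)

lemma bef_asymm {w : List ℕ} (hw : w.Nodup) {a b : ℕ}
    (h1 : Bef w a b) (h2 : Bef w b a) : False := by
  induction w with
  | nil => simp [Bef] at h1
  | cons z t ih =>
    have hz : z ∉ t := (List.nodup_cons.mp hw).1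
    have ht : t.Nodup := (List.nodup_cons.mp hw).2
    rcases pair_cons.mp h1 with ⟨rfl, hb⟩ | h1'
    · rcases pair_cons.mp h2 with ⟨rfl, ha⟩ | h2'
      · exact hz hb
      · exact hz (bef_mem_right h2')
    · rcases pair_cons.mp h2 with ⟨rfl, ha⟩ | h2'
      · exact hz (bef_mem_right h1')
      · exact ih ht h1' h2'

lemma bef_irrefl {w : List ℕ} (hw : w.Nodup) {a : ℕ} (h : Bef w a a) : False :=
  bef_asymm hw h h

lemma bef_trans {w : List ℕ} (hw : w.Nodup) {a b c : ℕ}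
    (h1 : Bef w a b) (h2 : Bef w b c) : Bef w a c := by
  induction w with
  | nil => simp [Bef] at h1
  | cons z t ih =>
    have hz : z ∉ t := (List.nodup_cons.mp hw).1
    have ht : t.Nodup := (List.nodup_cons.mp hw).2
    rcases pair_cons.mp h1 with ⟨rfl, hb⟩ | h1'
    · rcases pair_cons.mp h2 with ⟨rfl, hc⟩ | h2'
      · exact absurd hb hz
      · exact pair_cons.mpr (Or.inl ⟨rfl, bef_mem_right h2'⟩)
    · rcases pair_cons.mp h2 with ⟨rfl, hc⟩ | h2'
      · exact absurd (bef_mem_right h1') hz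
      · exact pair_cons.mpr (Or.inr (ih ht h1' h2'))

lemma bef_total {w : List ℕ} {a b : ℕ} (ha : a ∈ w) (hb : b ∈ w) (hne : a ≠ b) :
    Bef w a b ∨ Bef w b a := by
  induction w with
  | nil => simp at ha
  | cons z t ih =>
    rcases List.mem_cons.mp ha with rfl | ha'
    · have hb' : b ∈ t := by
        rcases List.mem_cons.mp hb with rfl | h
        · exact absurd rfl hne
        · exact h
      exact Or.inl (pair_cons.mpr (Or.inl ⟨rfl, hb'⟩))
    · rcases List.mem_cons.mp hb with rfl | hb'
      · exact Or.inr (pair_cons.mpr (Or.inl ⟨rfl, ha'⟩))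
      · rcases ih ha' hb' with h | h
        · exact Or.inl (h.cons _)
        · exact Or.inr (h.cons _)

lemma bef_iff_not {w : List ℕ} (hw : w.Nodup) {a b : ℕ}
    (ha : a ∈ w) (hb : b ∈ w) (hne : a ≠ b) : Bef w a b ↔ ¬ Bef w b a := by
  constructor
  · exact fun h1 h2 => bef_asymm hw h1 h2
  · intro h
    rcases bef_total ha hb hne with h' | h'
    · exact h'
    · exact absurd h' h

lemma bef_swap {p q : List ℕ} {x y a b : ℕ}
    (h1 : ¬(a = x ∧ b = y)) (h2 : ¬(a = y ∧ b = x)) :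
    Bef (p ++ x :: y :: q) a b ↔ Bef (p ++ y :: x :: q) a b := by
  simp only [pair_append, pair_cons, List.mem_cons]
  tauto

lemma bef_middle {p q : List ℕ} {x a b : ℕ} (ha : a ≠ x) (hb : b ≠ x) :
    Bef (p ++ x :: q) a b ↔ Bef (p ++ q) a b := by
  simp only [pair_append, pair_cons, List.mem_cons]
  tauto

lemma bef_to_x {p q : List ℕ} {x a : ℕ} (hp : x ∉ p) (hq : x ∉ q) (ha : a ≠ x) :
    Bef (p ++ x :: q) a x ↔ a ∈ p := by
  rw [pair_append]
  constructor
  · rintro (h | ⟨hap, _⟩ | h)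
    · exact absurd (bef_mem_right h) hp
    · exact hap
    · rcases pair_cons.mp h with ⟨rfl, _⟩ | h'
      · exact absurd rfl ha
      · exact absurd (bef_mem_right h') hq
  · intro h
    exact Or.inr (Or.inl ⟨h, List.mem_cons_self (a := x) (l := q)⟩)


open scoped Classical in
/-- number of elements of the `j`-window below `m` that appear before `m` in `w`. -/
noncomputable def codeF (j : ℕ) (w : List ℕ) (m : ℕ) : ℕ :=
  (w.toFinset.filter (fun a => a < m ∧ m < a + j ∧ Bef w a m)).card

noncomputable def codeL (j n : ℕ) (w : List ℕ) : List ℕ :=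
  (List.range' 1 n).map (codeF j w)

lemma codeF_swap {j : ℕ} {p q : List ℕ} {x y : ℕ}
    (hxy : j ≤ ((x : ℤ) - (y : ℤ)).natAbs) (m : ℕ) :
    codeF j (p ++ x :: y :: q) m = codeF j (p ++ y :: x :: q) m := by
  classical
  have hperm : (p ++ x :: y :: q).Perm (p ++ y :: x :: q) :=
    List.Perm.append_left p (List.Perm.swap y x q)
  unfold codeF
  congr 1
  ext a
  simp only [Finset.mem_filter, List.mem_toFinset]
  constructor
  · rintro ⟨hm, h1, h2, h3⟩
    refine ⟨hperm.mem_iff.mp hm, h1, h2, ?_⟩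
    rw [← bef_swap (p := p) (q := q) (x := x) (y := y) ?_ ?_]
    · exact h3
    · rintro ⟨rfl, rfl⟩; omega
    · rintro ⟨rfl, rfl⟩; omega
  · rintro ⟨hm, h1, h2, h3⟩
    refine ⟨hperm.mem_iff.mpr hm, h1, h2, ?_⟩
    rw [bef_swap (p := p) (q := q) (x := x) (y := y) ?_ ?_]
    · exact h3
    · rintro ⟨rfl, rfl⟩; omega
    · rintro ⟨rfl, rfl⟩; omega

lemma codeF_erase {j : ℕ} {p q : List ℕ} {x m : ℕ} (hm : m < x) :
    codeF j (p ++ x :: q) m = codeF j (p ++ q) m := by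
  classical
  unfold codeF
  congr 1
  ext a
  simp only [Finset.mem_filter, List.mem_toFinset, List.mem_append, List.mem_cons]
  constructor
  · rintro ⟨hmem, h1, h2, h3⟩
    have ha : a ≠ x := by omega
    refine ⟨?_, h1, h2, (bef_middle ha (by omega)).mp h3⟩
    rcases hmem with h | rfl | h
    · exact Or.inl h
    · omega
    · exact Or.inr h
  · rintro ⟨hmem, h1, h2, h3⟩
    have ha : a ≠ x := by omega
    refine ⟨?_, h1, h2, (bef_middle ha (by omega)).mpr h3⟩
    tauto

lemma codeF_top {j : ℕ} {p q : List ℕ} {x : ℕ} (hp : x ∉ p) (hq : x ∉ q)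
    (hnp : p.Nodup) :
    codeF j (p ++ x :: q) x = p.countP (fun a => decide (a < x ∧ x < a + j)) := by
  classical
  unfold codeF
  rw [List.countP_eq_length_filter]
  have hset : ((p ++ x :: q).toFinset.filter
      (fun a => a < x ∧ x < a + j ∧ Bef (p ++ x :: q) a x))
      = (p.filter (fun a => decide (a < x ∧ x < a + j))).toFinset := by
    ext a
    simp only [Finset.mem_filter, List.mem_toFinset, List.mem_append, List.mem_cons,
      List.mem_filter, decide_eq_true_eq]
    constructor
    · rintro ⟨hmem, h1, h2, h3⟩
      have ha : a ≠ x := by omega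
      exact ⟨(bef_to_x hp hq ha).mp h3, h1, h2⟩
    · rintro ⟨hmem, h1, h2⟩
      have ha : a ≠ x := by omega
      exact ⟨Or.inl hmem, h1, h2, (bef_to_x hp hq ha).mpr hmem⟩
  rw [hset]
  exact List.toFinset_card_of_nodup (hnp.filter _)

lemma countP_window_range {n j : ℕ} (hj : 1 ≤ j) :
    (List.range' 1 n).countP (fun a => decide (a < n + 1 ∧ n + 1 < a + j))
      = min n (j - 1) := by
  set P : ℕ → Bool := fun a => decide (a < n + 1 ∧ n + 1 < a + j) with hP
  set t : ℕ := min n (j - 1) with ht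
  apply le_antisymm
  · -- upper bound
    rw [List.countP_eq_length_filter]
    have hnd : ((List.range' 1 n).filter P).Nodup :=
      (List.nodup_range' (s := 1) (n := n)).filter _
    rw [← List.toFinset_card_of_nodup hnd]
    have hsub : ((List.range' 1 n).filter P).toFinset ⊆
        Finset.Icc (max 1 (n + 2 - j)) n := by
      intro a ha
      simp only [List.mem_toFinset, List.mem_filter, List.mem_range'_1, hP,
        decide_eq_true_eq] at ha
      simp only [Finset.mem_Icc]
      omega
    calc ((List.range' 1 n).filter P).toFinset.card
        ≤ (Finset.Icc (max 1 (n + 2 - j)) n).card := Finset.card_le_card hsub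
      _ = n + 1 - max 1 (n + 2 - j) := Nat.card_Icc _ _
      _ ≤ t := by omega
  · -- lower bound
    have hsplit : List.range' 1 (n - t) ++ List.range' (1 + (n - t)) t
        = List.range' 1 n := by
      have := List.range'_append (s := 1) (m := n - t) (n := t) (step := 1)
      rw [one_mul, show n - t + t = n by omega] at this; exact this
    have hsub : (List.range' (1 + (n - t)) t).Sublist (List.range' 1 n) := by
      rw [← hsplit]
      exact List.sublist_append_right _ _
    have hall : (List.range' (1 + (n - t)) t).countP P = t := by
      rw [List.countP_eq_length.mpr, List.length_range']
      intro a ha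
      simp only [List.mem_range'_1] at ha
      simp only [hP, decide_eq_true_eq]
      omega
    calc t = (List.range' (1 + (n - t)) t).countP P := hall.symm
      _ ≤ (List.range' 1 n).countP P := hsub.countP_le (p := P)


lemma adj_perm {j : ℕ} {u v : List ℕ} (h : AdjSwapGe j u v) : u.Perm v := by
  obtain ⟨p, q, x, y, _, rfl, rfl⟩ := h
  exact List.Perm.append_left p (List.Perm.swap y x q)

lemma eqvgen_perm {j : ℕ} {u v : List ℕ}
    (h : Relation.EqvGen (AdjSwapGe j) u v) : u.Perm v := by
  induction h with
  | rel _ _ h => exact adj_perm h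
  | refl _ => exact List.Perm.refl _
  | symm _ _ _ ih => exact ih.symm
  | trans _ _ _ _ _ ih₁ ih₂ => exact ih₁.trans ih₂

lemma adj_codeF {j : ℕ} {u v : List ℕ} (h : AdjSwapGe j u v) (m : ℕ) :
    codeF j u m = codeF j v m := by
  obtain ⟨p, q, x, y, hxy, rfl, rfl⟩ := h
  exact codeF_swap hxy m

lemma eqvgen_codeF {j : ℕ} {u v : List ℕ}
    (h : Relation.EqvGen (AdjSwapGe j) u v) (m : ℕ) :
    codeF j u m = codeF j v m := by
  induction h with
  | rel _ _ h => exact adj_codeF h m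
  | refl _ => rfl
  | symm _ _ _ ih => exact ih.symm
  | trans _ _ _ _ _ ih₁ ih₂ => exact ih₁.trans ih₂

lemma exists_discordant :
    ∀ u v : List ℕ, u.Perm v → u.Nodup → u ≠ v →
      ∃ p x y q, u = p ++ x :: y :: q ∧ Bef v y x := by
  intro u
  induction u with
  | nil =>
    intro v hp _ hne
    exact absurd hp.nil_eq hne
  | cons a u' ih =>
    intro v hp hnd hne
    obtain ⟨b, v', rfl⟩ : ∃ b v', v = b :: v' := by
      cases v with
      | nil => exact absurd hp.symm.nil_eq (fun h => hne h.symm)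
      | cons b v' => exact ⟨b, v', rfl⟩
    by_cases hab : a = b
    · subst hab
      have hp' : u'.Perm v' := hp.cons_inv
      have hne' : u' ≠ v' := fun h => hne (by rw [h])
      obtain ⟨p, x, y, q, heq, hb⟩ := ih v' hp' (List.nodup_cons.mp hnd).2 hne'
      exact ⟨a :: p, x, y, q, by simp [heq], hb.cons a⟩
    · have hbu' : b ∈ u' := by
        have : b ∈ a :: u' := hp.mem_iff.mpr (List.mem_cons_self (a := b) (l := v'))
        rcases List.mem_cons.mp this with h | h
        · exact absurd h.symm hab
        · exact h
      obtain ⟨u1, u2, heq⟩ := List.append_of_mem hbu'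
      have hne0 : a :: u1 ≠ [] := by simp
      set x := (a :: u1).getLast hne0 with hx
      set p0 := (a :: u1).dropLast with hp0
      have hax : a :: u1 = p0 ++ [x] := (List.dropLast_append_getLast hne0).symm
      have hueq : a :: u' = p0 ++ x :: b :: u2 := by
        rw [heq, show a :: (u1 ++ b :: u2) = (a :: u1) ++ b :: u2 from rfl, hax]
        simp
      have hxmem : x ∈ a :: u1 := by rw [hax]; simp
      have hnd2 : (x :: b :: u2).Nodup := by
        have hsub : (x :: b :: u2).Sublist (a :: u') := by
          rw [hueq]; exact List.sublist_append_right _ _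
        exact List.Nodup.sublist hsub hnd
      have hxb : x ≠ b := fun h =>
        (List.nodup_cons.mp hnd2).1 (h ▸ List.mem_cons_self (a := b) (l := u2))
      have hxv' : x ∈ v' := by
        have hxu : x ∈ a :: u' := by
          rw [hueq]
          exact List.mem_append_right _ (List.mem_cons_self (a := x))
        rcases List.mem_cons.mp (hp.mem_iff.mp hxu) with h | h
        · exact absurd h hxb
        · exact h
      exact ⟨p0, x, b, u2, hueq, pair_cons.mpr (Or.inl ⟨rfl, hxv'⟩)⟩

open scoped Classical in
noncomputable def discord (u v : List ℕ) : ℕ :=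
  ((u.toFinset ×ˢ u.toFinset).filter
    (fun ab => Bef u ab.1 ab.2 ∧ Bef v ab.2 ab.1)).card

lemma eqvgen_of_sameInv {j : ℕ} :
    ∀ u v : List ℕ, u.Perm v → u.Nodup →
      (∀ x y : ℕ, x ≠ y → ((x : ℤ) - (y : ℤ)).natAbs < j → (Bef u x y ↔ Bef v x y)) →
      Relation.EqvGen (AdjSwapGe j) u v := by
  classical
  have key : ∀ N : ℕ, ∀ u v : List ℕ, discord u v < N → u.Perm v → u.Nodup →
      (∀ x y : ℕ, x ≠ y → ((x : ℤ) - (y : ℤ)).natAbs < j → (Bef u x y ↔ Bef v x y)) →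
      Relation.EqvGen (AdjSwapGe j) u v := by
    intro N
    induction N with
    | zero => intro u v h; omega
    | succ N IH =>
      intro u v hD hp hnd hinv
      by_cases huv : u = v
      · subst huv; exact Relation.EqvGen.refl u
      obtain ⟨p, x, y, q, hueq, hbv⟩ := exists_discordant u v hp hnd huv
      have hndv : v.Nodup := hp.nodup_iff.mp hnd
      have hxyq : (x :: y :: q).Nodup :=
        List.Nodup.sublist (List.sublist_append_right p _) (hueq ▸ hnd)
      have hxy : x ≠ y := fun h =>
        (List.nodup_cons.mp hxyq).1 (h ▸ List.mem_cons_self (a := y) (l := q))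
      have hbuxy : Bef u x y := by
        rw [hueq]
        exact ((List.nil_sublist q).cons₂ y).cons₂ x |>.trans
          (List.sublist_append_right p _)
      have hfar : j ≤ ((x : ℤ) - (y : ℤ)).natAbs := by
        by_contra hcl
        push_neg at hcl
        exact bef_asymm hndv ((hinv x y hxy hcl).mp hbuxy) hbv
      set u' := p ++ y :: x :: q with hu'
      have hadj : AdjSwapGe j u u' := ⟨p, q, x, y, hfar, hueq, rfl⟩
      have hswapperm : u.Perm u' := adj_perm hadj
      have hndu' : u'.Nodup := hswapperm.nodup_iff.mp hnd
      have hbu'yx : Bef u' y x := by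
        rw [hu']
        exact ((List.nil_sublist q).cons₂ x).cons₂ y |>.trans
          (List.sublist_append_right p _)
      have hinv' : ∀ a b : ℕ, a ≠ b → ((a : ℤ) - (b : ℤ)).natAbs < j →
          (Bef u' a b ↔ Bef v a b) := by
        intro a b hab hcl
        have h1 : ¬(a = x ∧ b = y) := by rintro ⟨rfl, rfl⟩; omega
        have h2 : ¬(a = y ∧ b = x) := by rintro ⟨rfl, rfl⟩; omega
        rw [hu', ← bef_swap h1 h2, ← hueq]
        exact hinv a b hab hcl
      -- discord decreases
      have htofin : u'.toFinset = u.toFinset := List.toFinset_eq_of_perm _ _ hswapperm.symm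
      have hxu : x ∈ u.toFinset := by
        rw [List.mem_toFinset, hueq]
        exact List.mem_append_right _ (List.mem_cons_self (a := x))
      have hyu : y ∈ u.toFinset := by
        rw [List.mem_toFinset, hueq]
        exact List.mem_append_right _ (by simp)
      have hdec : discord u' v < discord u v := by
        apply Finset.card_lt_card
        constructor
        · intro ab hab
          simp only [Finset.mem_filter, Finset.mem_product, htofin] at hab ⊢
          obtain ⟨⟨hab1, hab2⟩, hb1, hb2⟩ := hab
          refine ⟨⟨hab1, hab2⟩, ?_, hb2⟩
          have h1 : ¬(ab.1 = x ∧ ab.2 = y) := by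
            rintro ⟨he1, he2⟩
            rw [he1, he2] at hb1
            exact bef_asymm hndu' hb1 hbu'yx
          have h2 : ¬(ab.1 = y ∧ ab.2 = x) := by
            rintro ⟨he1, he2⟩
            rw [he1, he2] at hb2
            exact bef_asymm hndv hb2 hbv
          rw [hueq, bef_swap h1 h2, ← hu']
          exact hb1
        · intro hsub
          have hxyin : (x, y) ∈ (u.toFinset ×ˢ u.toFinset).filter
              (fun ab => Bef u ab.1 ab.2 ∧ Bef v ab.2 ab.1) := by
            simp only [Finset.mem_filter, Finset.mem_product]
            exact ⟨⟨hxu, hyu⟩, hbuxy, hbv⟩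
          have := hsub hxyin
          simp only [Finset.mem_filter, Finset.mem_product, htofin] at this
          exact bef_asymm hndu' this.2.1 hbu'yx
      exact Relation.EqvGen.trans _ _ _ (Relation.EqvGen.rel _ _ hadj)
        (IH u' v (by omega) (hswapperm.symm.trans hp) hndu' hinv')
  intro u v hp hnd hinv
  exact key (discord u v + 1) u v (by omega) hp hnd hinv


lemma downclosed_eq {A S T : Finset ℕ} {r : ℕ → ℕ → Prop}
    (hS : S ⊆ A) (hT : T ⊆ A)
    (tot : ∀ a ∈ A, ∀ b ∈ A, a ≠ b → r a b ∨ r b a)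
    (hSd : ∀ a ∈ S, ∀ b ∈ A, r b a → b ∈ S)
    (hTd : ∀ a ∈ T, ∀ b ∈ A, r b a → b ∈ T)
    (hcard : S.card = T.card) : S = T := by
  by_contra hne
  have h1 : ¬ S ⊆ T := fun h => hne (Finset.eq_of_subset_of_card_le h (by omega))
  have h2 : ¬ T ⊆ S := fun h =>
    hne (Finset.eq_of_subset_of_card_le h (by omega)).symm
  obtain ⟨a, haS, haT⟩ := Finset.not_subset.mp h1
  obtain ⟨b, hbT, hbS⟩ := Finset.not_subset.mp h2
  have hab : a ≠ b := fun h => haT (h ▸ hbT)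
  rcases tot a (hS haS) b (hT hbT) hab with h | h
  · exact haT (hTd b hbT a (hS haS) h)
  · exact hbS (hSd a haS b (hT hbT) h)

lemma inv_of_code {j : ℕ} {u v : List ℕ} (hp : u.Perm v) (hnd : u.Nodup)
    (hc : ∀ m ∈ u, codeF j u m = codeF j v m) :
    ∀ x y : ℕ, x ≠ y → ((x : ℤ) - (y : ℤ)).natAbs < j → (Bef u x y ↔ Bef v x y) := by
  classical
  have hndv : v.Nodup := hp.nodup_iff.mp hnd
  have htf : v.toFinset = u.toFinset := List.toFinset_eq_of_perm _ _ hp.symm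
  have H : ∀ y : ℕ, ∀ x : ℕ, x < y → y < x + j → (Bef u x y ↔ Bef v x y) := by
    intro y
    induction y using Nat.strong_induction_on with
    | _ y IH =>
      intro x hxy hyxj
      by_cases hyu : y ∈ u
      swap
      · constructor
        · intro h; exact absurd (bef_mem_right h) hyu
        · intro h; exact absurd (hp.mem_iff.mpr (bef_mem_right h)) hyu
      by_cases hxu : x ∈ u
      swap
      · constructor
        · intro h; exact absurd (bef_mem_left h) hxu
        · intro h; exact absurd (hp.mem_iff.mpr (bef_mem_left h)) hxu
      -- core argument
      set A : Finset ℕ := u.toFinset.filter (fun a => a < y ∧ y < a + j) with hA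
      have hWiff : ∀ a ∈ A, ∀ b ∈ A, a ≠ b → (Bef u a b ↔ Bef v a b) := by
        intro a ha b hb hne
        simp only [hA, Finset.mem_filter, List.mem_toFinset] at ha hb
        rcases Nat.lt_or_ge a b with h | h
        · exact IH b (by omega) a h (by omega)
        · have hlt : b < a := by omega
          have h1 := IH a (by omega) b hlt (by omega)
          rw [bef_iff_not hnd ha.1 hb.1 hne,
            bef_iff_not hndv (hp.mem_iff.mp ha.1) (hp.mem_iff.mp hb.1) hne, h1]
      have hBu : (u.toFinset.filter (fun a => a < y ∧ y < a + j ∧ Bef u a y))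
          = A.filter (fun a => Bef u a y) := by
        rw [hA, Finset.filter_filter]
        apply Finset.filter_congr
        intro a _
        simp only [and_assoc]
      have hBv : (v.toFinset.filter (fun a => a < y ∧ y < a + j ∧ Bef v a y))
          = A.filter (fun a => Bef v a y) := by
        rw [hA, htf, Finset.filter_filter]
        apply Finset.filter_congr
        intro a _
        simp only [and_assoc]
      have hcard : (A.filter (fun a => Bef u a y)).card
          = (A.filter (fun a => Bef v a y)).card := by
        have := hc y hyu
        unfold codeF at this
        rw [hBu, hBv] at this
        exact this
      have hST : A.filter (fun a => Bef u a y) = A.filter (fun a => Bef v a y) := by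
        apply downclosed_eq (A := A) (r := Bef u) (Finset.filter_subset _ _)
          (Finset.filter_subset _ _) ?_ ?_ ?_ hcard
        · intro a ha b hb hne
          simp only [hA, Finset.mem_filter, List.mem_toFinset] at ha hb
          exact bef_total ha.1 hb.1 hne
        · intro a ha b hb hr
          simp only [Finset.mem_filter] at ha ⊢
          exact ⟨hb, bef_trans hnd hr ha.2⟩
        · intro a ha b hb hr
          simp only [Finset.mem_filter] at ha ⊢
          have hba : b ≠ a := by
            rintro rfl
            exact bef_irrefl hnd hr
          have hrv : Bef v b a := (hWiff b hb a ha.1 hba).mp hr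
          exact ⟨hb, bef_trans hndv hrv ha.2⟩
      have hxA : x ∈ A := by
        simp only [hA, Finset.mem_filter, List.mem_toFinset]
        exact ⟨hxu, hxy, hyxj⟩
      constructor
      · intro h
        have : x ∈ A.filter (fun a => Bef u a y) := by
          simp only [Finset.mem_filter]; exact ⟨hxA, h⟩
        rw [hST] at this
        exact (Finset.mem_filter.mp this).2
      · intro h
        have : x ∈ A.filter (fun a => Bef v a y) := by
          simp only [Finset.mem_filter]; exact ⟨hxA, h⟩
        rw [← hST] at this
        exact (Finset.mem_filter.mp this).2
  intro x y hne hcl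
  rcases Nat.lt_trichotomy x y with h | h | h
  · exact H y x h (by omega)
  · exact absurd h hne
  · by_cases hxu : x ∈ u
    · by_cases hyu : y ∈ u
      · rw [bef_iff_not hnd hxu hyu hne,
          bef_iff_not hndv (hp.mem_iff.mp hxu) (hp.mem_iff.mp hyu) hne,
          H x y h (by omega)]
      · constructor
        · intro hb; exact absurd (bef_mem_right hb) hyu
        · intro hb; exact absurd (hp.mem_iff.mpr (bef_mem_right hb)) hyu
    · constructor
      · intro hb; exact absurd (bef_mem_left hb) hxu
      · intro hb; exact absurd (hp.mem_iff.mpr (bef_mem_left hb)) hxu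


def insWord (P : ℕ → Bool) (x : ℕ) : ℕ → List ℕ → List ℕ
  | _, [] => [x]
  | 0, l => x :: l
  | k + 1, a :: t => a :: insWord P x (if P a then k else k + 1) t

lemma insWord_spec (P : ℕ → Bool) (x : ℕ) :
    ∀ (t : List ℕ) (k : ℕ), k ≤ t.countP P →
      ∃ p q, insWord P x k t = p ++ x :: q ∧ p ++ q = t ∧ p.countP P = k := by
  intro t
  induction t with
  | nil =>
    intro k h
    simp only [List.countP_nil, Nat.le_zero] at h
    subst h
    exact ⟨[], [], rfl, rfl, rfl⟩
  | cons a t ih =>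
    intro k h
    match k with
    | 0 => exact ⟨[], a :: t, rfl, rfl, rfl⟩
    | k + 1 =>
      have h' : (if P a then k else k + 1) ≤ t.countP P := by
        rw [List.countP_cons] at h
        split <;> rename_i hPa <;> simp [hPa] at h <;> omega
      obtain ⟨p, q, h1, h2, h3⟩ := ih _ h'
      refine ⟨a :: p, q, ?_, by rw [List.cons_append, h2], ?_⟩
      · show a :: insWord P x (if P a then k else k + 1) t = a :: p ++ x :: q
        rw [h1]; rfl
      · rw [List.countP_cons, h3]
        split at h3 <;> rename_i hPa <;> simp [hPa] <;> omega

def codesF (j : ℕ) : ℕ → Finset (List ℕ)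
  | 0 => {[]}
  | n + 1 =>
    (codesF j n ×ˢ Finset.range (min (n + 1) j)).image (fun ck => ck.1 ++ [ck.2])

lemma codesF_length {j : ℕ} : ∀ {n : ℕ} {c : List ℕ}, c ∈ codesF j n → c.length = n := by
  intro n
  induction n with
  | zero => intro c hc; simp [codesF] at hc; simp [hc]
  | succ n ih =>
    intro c hc
    simp only [codesF, Finset.mem_image, Finset.mem_product] at hc
    obtain ⟨⟨c', k⟩, ⟨hc', _⟩, rfl⟩ := hc
    simp [ih hc']

lemma codesF_card_succ (j n : ℕ) :
    (codesF j (n + 1)).card = (codesF j n).card * min (n + 1) j := by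
  rw [show codesF j (n + 1) = (codesF j n ×ˢ Finset.range (min (n + 1) j)).image
    (fun ck => ck.1 ++ [ck.2]) from rfl]
  rw [Finset.card_image_of_injOn, Finset.card_product, Finset.card_range]
  rintro ⟨c, k⟩ h1 ⟨c', k'⟩ h2 he
  simp only [Finset.coe_product, Set.mem_prod, Finset.mem_coe, Finset.mem_range] at h1 h2
  simp only at he
  have hlen : c.length = c'.length := by
    rw [codesF_length h1.1, codesF_length h2.1]
  obtain ⟨rfl, he2⟩ := List.append_inj he hlen
  simp only [List.cons.injEq] at he2
  simp [he2.1]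

lemma codesF_card (j : ℕ) (hj : 2 ≤ j) :
    ∀ n : ℕ, (codesF j n).card = if n ≤ j then n.factorial else j.factorial * j ^ (n - j) := by
  intro n
  induction n with
  | zero => simp [codesF]
  | succ n ih =>
    rw [codesF_card_succ, ih]
    by_cases h1 : n + 1 ≤ j
    · rw [if_pos h1, if_pos (by omega), Nat.min_eq_left h1, Nat.factorial_succ]
      ring
    · rw [if_neg h1, Nat.min_eq_right (by omega)]
      by_cases h2 : n ≤ j
      · have hnj : n = j := by omega
        subst hnj
        rw [if_pos le_rfl, show n + 1 - n = 1 by omega, pow_one]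
      · rw [if_neg h2, show n + 1 - j = (n - j) + 1 by omega, pow_succ]
        ring


lemma range'_succ_eq (n : ℕ) : List.range' 1 (n + 1) = List.range' 1 n ++ [n + 1] := by
  rw [List.range'_1_concat]
  simp [Nat.add_comm]

lemma middle_perm {n : ℕ} {w p q : List ℕ} (hperm : w.Perm (List.range' 1 (n + 1)))
    (hw : w = p ++ (n + 1) :: q) : (p ++ q).Perm (List.range' 1 n) := by
  have h3 : w.Perm ((n + 1) :: List.range' 1 n) := by
    rw [range'_succ_eq] at hperm
    have h2 : (List.range' 1 n ++ (n + 1) :: []).Perm ((n + 1) :: (List.range' 1 n ++ [])) :=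
      List.perm_middle
    simp only [List.append_nil] at h2
    exact hperm.trans h2
  have h4 : ((n + 1) :: (p ++ q)).Perm ((n + 1) :: List.range' 1 n) := by
    rw [hw] at h3
    exact (List.perm_middle.symm).trans h3
  exact h4.cons_inv

lemma codeL_decomp {j n : ℕ} {w p q : List ℕ} (hw : w = p ++ (n + 1) :: q) :
    codeL j (n + 1) w = codeL j n (p ++ q) ++ [codeF j w (n + 1)] := by
  unfold codeL
  rw [range'_succ_eq, List.map_append]
  congr 1
  apply List.map_congr_left
  intro m hm
  rw [hw]
  exact codeF_erase (by simp only [List.mem_range'_1] at hm; omega)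

lemma codeF_top_val {j n : ℕ} (hj : 2 ≤ j) {w p q : List ℕ}
    (hperm : w.Perm (List.range' 1 (n + 1))) (hweq : w = p ++ (n + 1) :: q) :
    codeF j w (n + 1) = p.countP (fun a => decide (a < n + 1 ∧ n + 1 < a + j)) ∧
      codeF j w (n + 1) ≤ min n (j - 1) := by
  have hnd : w.Nodup := hperm.nodup_iff.mpr (List.nodup_range' (s := 1) (n := n + 1))
  rw [hweq] at hnd
  obtain ⟨hnp, hnq, hdisj⟩ := List.nodup_append.mp hnd
  have hxp : (n + 1) ∉ p := fun h => hdisj _ h _ List.mem_cons_self rfl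
  have hxq : (n + 1) ∉ q := (List.nodup_cons.mp hnq).1
  have hval : codeF j w (n + 1) = p.countP (fun a => decide (a < n + 1 ∧ n + 1 < a + j)) := by
    rw [hweq]
    exact codeF_top hxp hxq hnp
  refine ⟨hval, ?_⟩
  rw [hval]
  have hcnt : (p ++ q).countP (fun a => decide (a < n + 1 ∧ n + 1 < a + j))
      = min n (j - 1) := by
    rw [List.Perm.countP_eq _ (middle_perm hperm hweq)]
    exact countP_window_range (by omega)
  calc p.countP (fun a => decide (a < n + 1 ∧ n + 1 < a + j))
      ≤ (p ++ q).countP (fun a => decide (a < n + 1 ∧ n + 1 < a + j)) := by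
        rw [List.countP_append]; omega
    _ = min n (j - 1) := hcnt

lemma codeL_image (j : ℕ) (hj : 2 ≤ j) :
    ∀ n : ℕ, codeL j n '' {w : List ℕ | w.Perm (List.range' 1 n)} = ↑(codesF j n) := by
  intro n
  induction n with
  | zero =>
    ext c
    simp only [Set.mem_image, Set.mem_setOf_eq, codesF, Finset.coe_singleton,
      Set.mem_singleton_iff]
    constructor
    · rintro ⟨w, hw, rfl⟩
      have : w = [] := by simpa using hw
      subst this
      simp [codeL]
    · rintro rfl
      exact ⟨[], by simp, by simp [codeL]⟩
  | succ n ih =>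
    ext c
    simp only [Set.mem_image, Set.mem_setOf_eq]
    constructor
    · rintro ⟨w, hw, rfl⟩
      have hmem : n + 1 ∈ w := hw.mem_iff.mpr (by simp [List.mem_range'_1])
      obtain ⟨p, q, hnp0, hweq, herase⟩ := List.exists_erase_eq hmem
      have hmp : (p ++ q).Perm (List.range' 1 n) := middle_perm hw hweq
      rw [codeL_decomp hweq]
      have h1 : codeL j n (p ++ q) ∈ codesF j n := by
        have hmem1 : codeL j n (p ++ q) ∈ codeL j n '' {w : List ℕ | w.Perm (List.range' 1 n)} :=
          ⟨p ++ q, hmp, rfl⟩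
        rw [ih] at hmem1
        exact hmem1
      have h2 : codeF j w (n + 1) < min (n + 1) j := by
        have := (codeF_top_val hj hw hweq).2
        omega
      simp only [codesF, Finset.coe_image, Set.mem_image, Finset.mem_coe,
        Finset.mem_product, Finset.mem_range]
      exact ⟨(codeL j n (p ++ q), codeF j w (n + 1)), ⟨h1, h2⟩, rfl⟩
    · intro hc
      simp only [codesF, Finset.mem_coe, Finset.mem_image, Finset.mem_product,
        Finset.mem_range] at hc
      obtain ⟨⟨c', k⟩, ⟨hc', hk⟩, rfl⟩ := hc
      have hmem1 : c' ∈ codeL j n '' {w : List ℕ | w.Perm (List.range' 1 n)} := by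
        rw [ih]; exact hc'
      obtain ⟨w', hw', hcw'⟩ := hmem1
      set P : ℕ → Bool := fun a => decide (a < n + 1 ∧ n + 1 < a + j) with hP
      have hcnt : w'.countP P = min n (j - 1) := by
        rw [List.Perm.countP_eq _ hw']
        exact countP_window_range (by omega)
      have hkle : k ≤ w'.countP P := by rw [hcnt]; omega
      obtain ⟨p, q, hins, hpq, hcp⟩ := insWord_spec P (n + 1) w' k hkle
      have hwperm : (insWord P (n + 1) k w').Perm (List.range' 1 (n + 1)) := by
        rw [hins, range'_succ_eq]
        have h2 : (List.range' 1 n ++ (n + 1) :: []).Perm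
            ((n + 1) :: (List.range' 1 n ++ [])) := List.perm_middle
        simp only [List.append_nil] at h2
        have h5 : (p ++ q).Perm (List.range' 1 n) := hpq ▸ hw'
        exact List.perm_middle.trans ((h5.cons _).trans h2.symm)
      refine ⟨insWord P (n + 1) k w', hwperm, ?_⟩
      rw [codeL_decomp hins]
      have hceq : codeL j n (p ++ q) = c' := by rw [hpq, hcw']
      have hkeq : codeF j (insWord P (n + 1) k w') (n + 1) = k := by
        rw [(codeF_top_val hj hwperm hins).1, ← hP, hcp]
      rw [hceq, hkeq]

lemma map_eq_imp {f g : ℕ → ℕ} : ∀ {l : List ℕ}, l.map f = l.map g → ∀ a ∈ l, f a = g a := by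
  intro l
  induction l with
  | nil => intro _ a ha; simp at ha
  | cons b t ih =>
    intro h a ha
    simp only [List.map_cons, List.cons.injEq] at h
    rcases List.mem_cons.mp ha with rfl | ha'
    · exact h.1
    · exact ih h.2 a ha'

lemma ncard_image_eq_of_iff {α β γ : Type*} (A : Set α) (f : α → β) (g : α → γ)
    (h : ∀ a ∈ A, ∀ b ∈ A, (f a = f b ↔ g a = g b)) :
    (f '' A).ncard = (g '' A).ncard := by
  classical
  rcases A.eq_empty_or_nonempty with rfl | ⟨a₀, ha₀⟩
  · simp
  haveI : Nonempty γ := ⟨g a₀⟩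
  set φ : β → γ := fun b =>
    if hb : ∃ a ∈ A, f a = b then g hb.choose else Classical.arbitrary γ with hφdef
  have hφ : ∀ a ∈ A, φ (f a) = g a := by
    intro a ha
    have hb : ∃ a' ∈ A, f a' = f a := ⟨a, ha, rfl⟩
    simp only [hφdef, dif_pos hb]
    exact (h _ hb.choose_spec.1 a ha).mp hb.choose_spec.2
  have himg : φ '' (f '' A) = g '' A := by
    rw [← Set.image_comp]
    exact Set.image_congr (fun a ha => hφ a ha)
  have hinj : Set.InjOn φ (f '' A) := by
    rintro b1 ⟨a, ha, rfl⟩ b2 ⟨a', ha', rfl⟩ hab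
    rw [hφ a ha, hφ a' ha'] at hab
    exact (h a ha a' ha').mpr hab
  calc (f '' A).ncard = (φ '' (f '' A)).ncard := (Set.ncard_image_of_injOn hinj).symm
    _ = (g '' A).ncard := by rw [himg]

end JEquiv

open JEquiv

/-- The number of equivalence classes on `Sₙ` (permutations of `1,…,n` in one-line
notation) of the relation generated by interchanging adjacent entries differing by at
least `j` is `n!` for `n ≤ j` and `j! · j^(n-j)` for `n > j`. -/
theorem stmt0 (j n : ℕ) (hj : 2 ≤ j) :
    numClasses (AdjSwapGe j) {w : List ℕ | w.Perm (List.range' 1 n)} =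
      if n ≤ j then n.factorial else j.factorial * j ^ (n - j) := by
  classical
  set W : Set (List ℕ) := {w : List ℕ | w.Perm (List.range' 1 n)} with hW
  have hiff : ∀ u ∈ W, ∀ v ∈ W,
      ((fun w => {z | Relation.EqvGen (AdjSwapGe j) w z}) u
        = (fun w => {z | Relation.EqvGen (AdjSwapGe j) w z}) v
        ↔ codeL j n u = codeL j n v) := by
    intro u hu v hv
    simp only [hW, Set.mem_setOf_eq] at hu hv
    have hndu : u.Nodup := hu.nodup_iff.mpr (List.nodup_range' (s := 1) (n := n))
    simp only
    constructor
    · intro hcls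
      have hE : Relation.EqvGen (AdjSwapGe j) u v := by
        have hv' : v ∈ {z | Relation.EqvGen (AdjSwapGe j) v z} := Relation.EqvGen.refl v
        rw [← hcls] at hv'
        exact hv'
      unfold codeL
      exact List.map_congr_left (fun m _ => eqvgen_codeF hE m)
    · intro hcode
      have hpuv : u.Perm v := hu.trans hv.symm
      have hcF : ∀ m ∈ u, codeF j u m = codeF j v m := by
        intro m hm
        exact map_eq_imp hcode m (hu.mem_iff.mp hm)
      have hE : Relation.EqvGen (AdjSwapGe j) u v :=
        eqvgen_of_sameInv u v hpuv hndu (inv_of_code hpuv hndu hcF)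
      ext z
      simp only [Set.mem_setOf_eq]
      exact ⟨fun h => Relation.EqvGen.trans v u z (Relation.EqvGen.symm u v hE) h,
        fun h => Relation.EqvGen.trans u v z hE h⟩
  have hset : {C : Set (List ℕ) | ∃ w ∈ W, C = {z | Relation.EqvGen (AdjSwapGe j) w z}}
      = (fun w => {z | Relation.EqvGen (AdjSwapGe j) w z}) '' W := by
    ext C
    simp only [Set.mem_setOf_eq, Set.mem_image]
    constructor
    · rintro ⟨w, hw, h⟩; exact ⟨w, hw, h.symm⟩
    · rintro ⟨w, hw, h⟩; exact ⟨w, hw, h.symm⟩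
  unfold numClasses
  rw [hset, ncard_image_eq_of_iff W _ (codeL j n) hiff, hW, codeL_image j hj n,
    Set.ncard_coe_finset, codesF_card j hj n]
end

section
/- Every equivalence class of the relation ∼ on S_n contains exactly one salient permutation. -/
/-- One interchange of two adjacent entries of a word whose values differ by exactly 1. -/
def AdjSwap1 (u v : List ℕ) : Prop :=
  ∃ (p q : List ℕ) (x y : ℕ), ((x : ℤ) - (y : ℤ)).natAbs = 1 ∧
    u = p ++ x :: y :: q ∧ v = p ++ y :: x :: q

/-- A word `w = a₁ a₂ ⋯ aₙ` is salient if we never have `aᵢ = aᵢ₊₁ + 1`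
and never have `aᵢ = aᵢ₊₁ + 2 = aᵢ₊₂ + 1`. -/
def Salient (w : List ℕ) : Prop :=
  (∀ (p q : List ℕ) (x y : ℕ), w = p ++ x :: y :: q → x ≠ y + 1) ∧
  (∀ (p q : List ℕ) (x y z : ℕ), w = p ++ x :: y :: z :: q → ¬(x = y + 2 ∧ x = z + 1))

/-- recursive version of salient -/
def sal : List ℕ → Prop
  | [] => True
  | [_] => True
  | [x, y] => x ≠ y + 1
  | x :: y :: z :: t => x ≠ y + 1 ∧ ¬(x = y + 2 ∧ x = z + 1) ∧ sal (y :: z :: t)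

lemma sal_tail {x : ℕ} {t : List ℕ} (h : sal (x :: t)) : sal t := by
  match t with
  | [] => trivial
  | [_] => trivial
  | y :: z :: u => exact h.2.2

lemma salient_tail {x : ℕ} {t : List ℕ} (h : Salient (x :: t)) : Salient t := by
  constructor
  · intro p q a b hd; exact h.1 (x :: p) q a b (by simp [hd])
  · intro p q a b c hd; exact h.2 (x :: p) q a b c (by simp [hd])

lemma sal_of_salient : ∀ l, Salient l → sal l
  | [] => fun _ => trivial
  | [_] => fun _ => trivial
  | [x, y] => fun h => h.1 [] [] x y rfl
  | x :: y :: z :: t => fun h =>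
    ⟨h.1 [] (z :: t) x y rfl, h.2 [] t x y z rfl,
      sal_of_salient _ (salient_tail h)⟩

lemma salient_of_sal : ∀ l, sal l → Salient l := by
  intro l
  induction l with
  | nil => intro _; exact ⟨fun p q x y h => by simp at h, fun p q x y z h => by simp at h⟩
  | cons a t ih =>
    intro h
    constructor
    · intro p q x y hd
      match p, hd with
      | [], hd =>
        obtain ⟨rfl, rfl⟩ : a = x ∧ t = y :: q := by simpa using hd
        match q, h with
        | [], h => exact h
        | _ :: _, h => exact h.1
      | c :: p', hd =>
        have h2 : t = p' ++ x :: y :: q := by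
          have := hd; simp only [List.cons_append, List.cons.injEq] at this
          exact this.2
        exact (ih (sal_tail h)).1 p' q x y h2
    · intro p q x y z hd
      match p, hd with
      | [], hd =>
        obtain ⟨rfl, rfl⟩ : a = x ∧ t = y :: z :: q := by simpa using hd
        exact h.2.1
      | c :: p', hd =>
        have h2 : t = p' ++ x :: y :: z :: q := by
          have := hd; simp only [List.cons_append, List.cons.injEq] at this
          exact this.2
        exact (ih (sal_tail h)).2 p' q x y z h2

/-- salient insertion -/
def ins : ℕ → List ℕ → List ℕ
  | x, [] => [x]
  | x, [y] => if x = y + 1 then [y, x] else [x, y]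
  | x, y :: z :: t =>
    if x = y + 1 then y :: x :: z :: t
    else if x = y + 2 ∧ x = z + 1 then z :: x :: ins y t
    else x :: y :: z :: t


lemma ins_caseA {x y : ℕ} (l : List ℕ) (h : x = y + 1) : ins x (y :: l) = y :: x :: l := by
  match l with
  | [] => simp only [ins]; rw [if_pos h]
  | z :: t => simp only [ins]; rw [if_pos h]

lemma ins_caseE1 {x y : ℕ} (h : x ≠ y + 1) : ins x [y] = [x, y] := by
  simp only [ins]; rw [if_neg h]

lemma ins_caseB {x y z : ℕ} (t : List ℕ) (h1 : x ≠ y + 1) (h2 : x = y + 2) (h3 : x = z + 1) :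
    ins x (y :: z :: t) = z :: x :: ins y t := by
  simp only [ins]; rw [if_neg h1, if_pos ⟨h2, h3⟩]

lemma ins_caseE {x y z : ℕ} (t : List ℕ) (h1 : x ≠ y + 1) (h2 : ¬(x = y + 2 ∧ x = z + 1)) :
    ins x (y :: z :: t) = x :: y :: z :: t := by
  simp only [ins]; rw [if_neg h1, if_neg h2]

lemma ins_perm : ∀ (x : ℕ) (l : List ℕ), (ins x l).Perm (x :: l)
  | x, [] => by simp [ins]
  | x, [y] => by
    simp only [ins]; split_ifs
    · exact List.Perm.swap x y []
    · rfl
  | x, y :: z :: t => by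
    simp only [ins]; split_ifs
    · exact List.Perm.swap x y (z :: t)
    · refine (((ins_perm y t).cons x).cons z).trans ?_
      refine (List.Perm.swap x z (y :: t)).trans ?_
      exact (List.Perm.swap y z t).cons x
    · exact List.Perm.refl _

lemma sal_cons_of {x : ℕ} {m : List ℕ} (hm : sal m) (h : ∀ a ∈ m, x ≠ a + 1) :
    sal (x :: m) := by
  match m with
  | [] => trivial
  | [y] => exact h y (by simp)
  | y :: z :: t =>
    refine ⟨h y (by simp), fun hc => h z (by simp) hc.2, hm⟩

lemma sal_cons_cons {x z : ℕ} {m : List ℕ} (hm : sal (x :: m)) (h1 : z ≠ x + 1)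
    (h2 : z ≠ x + 2) : sal (z :: x :: m) := by
  match m with
  | [] => exact h1
  | y :: t => exact ⟨h1, fun hc => h2 hc.1, hm⟩

lemma mem_ins {a x : ℕ} {l : List ℕ} (h : a ∈ ins x l) : a = x ∨ a ∈ l := by
  have := (ins_perm x l).mem_iff.mp h
  simpa using this

lemma sal_ins : ∀ (x : ℕ) (l : List ℕ), sal l → (x :: l).Nodup → sal (ins x l)
  | x, [] => by intro _ _; trivial
  | x, [y] => by
    intro h hn
    simp only [ins]; split_ifs with h1
    · simp only [sal]; omega
    · simpa only [sal] using h1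
  | x, y :: z :: t => by
    intro hs hn
    simp only [List.nodup_cons, List.mem_cons] at hn
    have hxy : x ≠ y := by tauto
    have hxz : x ≠ z := by tauto
    have hyz : y ≠ z := by tauto
    have hxt : x ∉ t := by tauto
    have hyt : y ∉ t := by tauto
    have hzt : z ∉ t := by tauto
    have hnt : t.Nodup := hn.2.2.2
    simp only [ins]; split_ifs with h1 h2
    · -- y :: x :: z :: t with x = y + 1
      refine sal_cons_cons ?_ (by omega) (by omega)
      refine sal_cons_of (sal_tail hs) ?_
      intro a ha hc
      rcases List.mem_cons.mp ha with rfl | ha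
      · exact hyz (by omega)
      · have : a = y := by omega
        exact hyt (this ▸ ha)
    · -- z :: x :: ins y t with x = y + 2, x = z + 1
      obtain ⟨hy2, hz1⟩ := h2
      have IH : sal (ins y t) := sal_ins y t (sal_tail (sal_tail hs))
        (List.nodup_cons.mpr ⟨hyt, hnt⟩)
      refine sal_cons_cons ?_ (by omega) (by omega)
      refine sal_cons_of IH ?_
      intro a ha hc
      rcases mem_ins ha with rfl | ha
      · omega
      · have : a = z := by omega
        exact hzt (this ▸ ha)
    · exact ⟨h1, h2, hs⟩

lemma ins_eq_cons : ∀ (x : ℕ) (l : List ℕ), sal (x :: l) → ins x l = x :: l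
  | _, [], _ => by simp [ins]
  | x, [y], h => by
    simp only [ins]
    rw [if_neg (by simpa only [sal] using h)]
  | x, y :: z :: t, h => by
    simp only [ins]
    rw [if_neg h.1, if_neg h.2.1]

lemma ins_L : ∀ (t : List ℕ) (y : ℕ), sal (y :: (y + 1) :: t) → (y :: (y + 1) :: t).Nodup →
    ins (y + 1) (ins y t) = y :: (y + 1) :: t
  | [], y, _, _ => by simp [ins]
  | [w], y, hs, hn => by
    have hw : y + 1 ≠ w + 1 := by simpa only [sal] using hs.2.2
    by_cases h1 : y = w + 1
    · rw [ins_caseA [] h1, ins_caseB [] (by omega) (by omega) rfl]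
      simp [ins]
    · rw [ins_caseE1 h1, ins_caseA [w] rfl]
  | w :: v :: u, y, hs, hn => by
    have hsw : sal (w :: v :: u) := hs.2.2.2.2
    by_cases h1 : y = w + 1
    · rw [ins_caseA (v :: u) h1, ins_caseB (v :: u) (by omega) (by omega) rfl,
        ins_eq_cons w (v :: u) hsw]
    · by_cases h2 : y = w + 2 ∧ y = v + 1
      · have hv : v = w + 1 := by omega
        rw [ins_caseB u h1 h2.1 h2.2, ins_caseB (ins w u) (by omega) (by omega) rfl]
        have hnu : (w :: (w + 1) :: u).Nodup := by
          have := (List.nodup_cons.mp (List.nodup_cons.mp hn).2).2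
          rwa [hv] at this
        have hsu : sal (w :: (w + 1) :: u) := by rwa [hv] at hsw
        rw [hv, ins_L u w hsu hnu]
      · rw [ins_caseE u h1 h2, ins_caseA (w :: v :: u) rfl]

lemma ins_notmem_high (a : ℕ) (m : List ℕ) (ha : a ∉ m) : ins (a + 1) m = (a + 1) :: m := by
  match m with
  | [] => simp [ins]
  | [y] =>
    have : y ≠ a := fun h => ha (by simp [h])
    exact ins_caseE1 (by omega)
  | y :: z :: t =>
    have hy : y ≠ a := fun h => ha (by simp [h])
    have hz : z ≠ a := fun h => ha (by simp [h])
    exact ins_caseE t (by omega) (by omega)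

lemma ins_ins_above (a : ℕ) (m : List ℕ) (ha : a ∉ m) :
    ins a (ins (a + 1) m) = a :: (a + 1) :: m := by
  rw [ins_notmem_high a m ha]
  match m with
  | [] => exact ins_caseE1 (by omega)
  | y :: t => exact ins_caseE t (by omega) (by omega)

lemma ins_ins_below (a : ℕ) (m : List ℕ) (hs : sal m) (hn : m.Nodup)
    (ha : a ∉ m) (hb : a + 1 ∉ m) : ins (a + 1) (ins a m) = a :: (a + 1) :: m := by
  match m with
  | [] => simp [ins]
  | [y] =>
    have hy : y ≠ a ∧ y ≠ a + 1 := by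
      constructor <;> intro h <;> [exact ha (by simp [h]); exact hb (by simp [h])]
    by_cases h1 : a = y + 1
    · rw [ins_caseA [] h1, ins_caseB [] (by omega) (by omega) rfl]
      simp [ins]
    · rw [ins_caseE1 h1, ins_caseA [y] rfl]
  | y :: z :: t =>
    simp only [List.mem_cons, not_or] at ha hb
    by_cases h1 : a = y + 1
    · rw [ins_caseA (z :: t) h1, ins_caseB (z :: t) (by omega) (by omega) rfl,
        ins_eq_cons y (z :: t) hs]
    · by_cases h2 : a = y + 2 ∧ a = z + 1
      · have hz : z = y + 1 := by omega
        rw [ins_caseB t h1 h2.1 h2.2, ins_caseB (ins y t) (by omega) (by omega) rfl, hz,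
          ins_L t y (hz ▸ hs) (hz ▸ hn)]
      · rw [ins_caseE t h1 h2, ins_caseA (y :: z :: t) rfl]

lemma adjswap_cons {u v : List ℕ} (c : ℕ) (h : AdjSwap1 u v) : AdjSwap1 (c :: u) (c :: v) := by
  obtain ⟨p, q, x, y, hxy, rfl, rfl⟩ := h
  exact ⟨c :: p, q, x, y, hxy, rfl, rfl⟩

lemma eqv_cons {u v : List ℕ} (c : ℕ) (h : Relation.EqvGen AdjSwap1 u v) :
    Relation.EqvGen AdjSwap1 (c :: u) (c :: v) := by
  induction h with
  | rel _ _ h => exact Relation.EqvGen.rel _ _ (adjswap_cons c h)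
  | refl _ => exact Relation.EqvGen.refl _
  | symm _ _ _ ih => exact ih.symm _ _
  | trans _ _ _ _ _ ih1 ih2 => exact ih1.trans _ _ _ ih2

lemma adjswap_perm {u v : List ℕ} (h : AdjSwap1 u v) : u.Perm v := by
  obtain ⟨p, q, x, y, _, rfl, rfl⟩ := h
  exact List.Perm.append_left p (List.Perm.swap y x q)

lemma eqv_perm {u v : List ℕ} (h : Relation.EqvGen AdjSwap1 u v) : u.Perm v := by
  induction h with
  | rel _ _ h => exact adjswap_perm h
  | refl _ => exact List.Perm.refl _
  | symm _ _ _ ih => exact ih.symm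
  | trans _ _ _ _ _ ih1 ih2 => exact ih1.trans ih2

lemma eqv_ins : ∀ (x : ℕ) (l : List ℕ), Relation.EqvGen AdjSwap1 (x :: l) (ins x l)
  | x, [] => by simp [ins]; exact Relation.EqvGen.refl _
  | x, [y] => by
    by_cases h : x = y + 1
    · rw [ins_caseA [] h]
      exact Relation.EqvGen.rel _ _ ⟨[], [], x, y, by omega, rfl, rfl⟩
    · rw [ins_caseE1 h]; exact Relation.EqvGen.refl _
  | x, y :: z :: t => by
    by_cases h1 : x = y + 1
    · rw [ins_caseA (z :: t) h1]
      exact Relation.EqvGen.rel _ _ ⟨[], z :: t, x, y, by omega, rfl, rfl⟩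
    · by_cases h2 : x = y + 2 ∧ x = z + 1
      · rw [ins_caseB t h1 h2.1 h2.2]
        have s1 : Relation.EqvGen AdjSwap1 (x :: y :: z :: t) (x :: z :: y :: t) :=
          Relation.EqvGen.rel _ _ ⟨[x], t, y, z, by omega, rfl, rfl⟩
        have s2 : Relation.EqvGen AdjSwap1 (x :: z :: y :: t) (z :: x :: y :: t) :=
          Relation.EqvGen.rel _ _ ⟨[], y :: t, x, z, by omega, rfl, rfl⟩
        have s3 : Relation.EqvGen AdjSwap1 (z :: x :: y :: t) (z :: x :: ins y t) :=
          eqv_cons z (eqv_cons x (eqv_ins y t))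
        exact (s1.trans _ _ _ s2).trans _ _ _ s3
      · rw [ins_caseE t h1 h2]; exact Relation.EqvGen.refl _

def norm : List ℕ → List ℕ
  | [] => []
  | x :: t => ins x (norm t)

lemma norm_perm : ∀ w : List ℕ, (norm w).Perm w
  | [] => List.Perm.refl _
  | x :: t => (ins_perm x (norm t)).trans ((norm_perm t).cons x)

lemma norm_sal {w : List ℕ} (hn : w.Nodup) : sal (norm w) := by
  induction w with
  | nil => trivial
  | cons x t ih =>
    have hn' := List.nodup_cons.mp hn
    have : (x :: norm t).Nodup := by
      refine List.nodup_cons.mpr ⟨fun h => hn'.1 ((norm_perm t).mem_iff.mp h), ?_⟩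
      exact ((norm_perm t).nodup_iff).mpr hn'.2
    exact sal_ins x (norm t) (ih hn'.2) this

lemma norm_eqv : ∀ w : List ℕ, Relation.EqvGen AdjSwap1 w (norm w)
  | [] => Relation.EqvGen.refl _
  | x :: t => (eqv_cons x (norm_eqv t)).trans _ _ _ (eqv_ins x (norm t))

lemma norm_fix : ∀ {w : List ℕ}, sal w → norm w = w
  | [], _ => rfl
  | x :: t, h => by
    show ins x (norm t) = x :: t
    rw [norm_fix (sal_tail h)]
    exact ins_eq_cons x t h

lemma norm_append : ∀ (p r : List ℕ), norm (p ++ r) = List.foldr ins (norm r) p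
  | [], r => rfl
  | h :: p, r => by
    show ins h (norm (p ++ r)) = _
    rw [norm_append p r]; rfl

lemma norm_swap {u v : List ℕ} (h : AdjSwap1 u v) (hn : u.Nodup) : norm u = norm v := by
  obtain ⟨p, q, x, y, hxy, rfl, rfl⟩ := h
  rw [norm_append, norm_append]
  congr 1
  show norm (x :: y :: q) = norm (y :: x :: q)
  show ins x (ins y (norm q)) = ins y (ins x (norm q))
  have hq : q.Nodup ∧ x ∉ q ∧ y ∉ q ∧ x ≠ y := by
    have := hn
    simp only [List.nodup_append, List.nodup_cons, List.mem_cons] at this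
    tauto
  have hs : sal (norm q) := norm_sal hq.1
  have hnq : (norm q).Nodup := ((norm_perm q).nodup_iff).mpr hq.1
  have hx : x ∉ norm q := fun h => hq.2.1 ((norm_perm q).mem_iff.mp h)
  have hy : y ∉ norm q := fun h => hq.2.2.1 ((norm_perm q).mem_iff.mp h)
  rcases (by omega : x = y + 1 ∨ y = x + 1) with h | h
  · subst h
    rw [ins_ins_below y (norm q) hs hnq hy hx, ins_ins_above y (norm q) hy]
  · subst h
    rw [ins_ins_above x (norm q) hx, ins_ins_below x (norm q) hs hnq hx hy]

lemma eqv_norm_eq {u v : List ℕ} (h : Relation.EqvGen AdjSwap1 u v) (hn : u.Nodup) :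
    norm u = norm v := by
  induction h with
  | rel _ _ h => exact norm_swap h hn
  | refl _ => rfl
  | symm a b hab ih =>
    have : a.Nodup := ((eqv_perm hab).nodup_iff).mpr hn
    exact (ih this).symm
  | trans a b c hab _ ih1 ih2 =>
    exact (ih1 hn).trans (ih2 (((eqv_perm hab).nodup_iff).mp hn))

/-- Every equivalence class of the relation `∼` on `Sₙ` (generated by interchanging
adjacent entries differing by exactly one) contains exactly one salient permutation. -/
theorem stmt1 (n : ℕ) (w : List ℕ) (hw : w.Perm (List.range' 1 n)) :
    ∃! v : List ℕ, Relation.EqvGen AdjSwap1 w v ∧ Salient v := by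
  have hnd : w.Nodup := (hw.nodup_iff).mpr (List.nodup_range' (h := Nat.one_pos))
  refine ⟨norm w, ⟨norm_eqv w, salient_of_sal _ (norm_sal hnd)⟩, ?_⟩
  rintro v ⟨hvw, hvs⟩
  rw [← norm_fix (sal_of_salient v hvs), ← eqv_norm_eq hvw hnd]
end

section
/- The number of salient permutations in S_n equals Σ_{j=0}^{⌊n/2⌋} (−1)^j (n−j)! · C(n−j, j). Consequently, the number of permutations w ∈ S_n that never contain the factor (consecutive entries) i+1, i and never contain the factor i+2, i, i+1 is given by this alternating sum. -/
open List Finset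

namespace Stmt4

def Fac (x y : ℕ) (w : List ℕ) : Prop := [x, y] <:+: w
def Fac3 (x y z : ℕ) (w : List ℕ) : Prop := [x, y, z] <:+: w

theorem eq_of_append_cons {x : ℕ} :
    ∀ (p₁ : List ℕ) {p₂ r₁ r₂ : List ℕ}, p₁ ++ x :: r₁ = p₂ ++ x :: r₂ →
      (p₁ ++ x :: r₁).Nodup → p₁ = p₂ ∧ r₁ = r₂ := by
  intro p₁
  induction p₁ with
  | nil =>
    intro p₂ r₁ r₂ h hn
    cases p₂ with
    | nil => simpa using h
    | cons b p₂ =>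
      simp only [nil_append, cons_append, List.cons.injEq] at h
      simp only [nil_append, nodup_cons] at hn
      exact absurd (h.2 ▸ (by simp : x ∈ p₂ ++ x :: r₂)) hn.1
  | cons a p₁ ih =>
    intro p₂ r₁ r₂ h hn
    cases p₂ with
    | nil =>
      simp only [cons_append, nil_append, List.cons.injEq] at h
      simp only [cons_append, nodup_cons] at hn
      refine absurd (show a ∈ p₁ ++ x :: r₁ by rw [h.1]; simp) hn.1
    | cons b p₂ =>
      simp only [cons_append, List.cons.injEq] at h
      simp only [cons_append, nodup_cons] at hn
      obtain ⟨h3, h4⟩ := ih h.2 hn.2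
      exact ⟨by rw [h.1, h3], h4⟩

theorem succ_unique {w : List ℕ} (hn : w.Nodup) {x y z : ℕ}
    (h1 : Fac x y w) (h2 : Fac x z w) : y = z := by
  obtain ⟨s1, t1, e1⟩ := h1
  obtain ⟨s2, t2, e2⟩ := h2
  simp only [List.append_assoc, cons_append, nil_append] at e1 e2
  have h := eq_of_append_cons s1 (e1.trans e2.symm) (e1 ▸ hn)
  injection h.2

theorem fac_rev {w : List ℕ} {x y : ℕ} : Fac x y w ↔ Fac y x w.reverse := by
  constructor
  · intro h
    simpa [Fac] using List.reverse_infix.mpr h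
  · intro h
    have := List.reverse_infix.mpr h
    simpa [Fac] using this

theorem pred_unique {w : List ℕ} (hn : w.Nodup) {x y z : ℕ}
    (h1 : Fac x z w) (h2 : Fac y z w) : x = y :=
  succ_unique (List.nodup_reverse.mpr hn) (fac_rev.mp h1) (fac_rev.mp h2)

theorem fac3_left {w : List ℕ} {x y z : ℕ} (h : Fac3 x y z w) : Fac x y w := by
  obtain ⟨s, t, e⟩ := h
  exact ⟨s, z :: t, by simpa using e⟩

theorem fac3_right {w : List ℕ} {x y z : ℕ} (h : Fac3 x y z w) : Fac y z w := by
  obtain ⟨s, t, e⟩ := h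
  exact ⟨s ++ [x], t, by simpa using e⟩

theorem glue {w : List ℕ} (hn : w.Nodup) {x y z : ℕ}
    (h1 : Fac x y w) (h2 : Fac y z w) : Fac3 x y z w := by
  obtain ⟨s1, t1, e1⟩ := h1
  obtain ⟨s2, t2, e2⟩ := h2
  simp only [List.append_assoc, cons_append, nil_append] at e1 e2
  have e1' : (s1 ++ [x]) ++ y :: t1 = w := by simpa using e1
  have h := eq_of_append_cons (s1 ++ [x]) (e1'.trans e2.symm) (e1' ▸ hn)
  refine ⟨s1, t2, ?_⟩
  simp only [List.append_assoc, cons_append, nil_append]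
  rw [← e1, ← h.2]

theorem fac_mem_left {w : List ℕ} {x y : ℕ} (h : Fac x y w) : x ∈ w :=
  h.subset (by simp)

theorem fac_mem_right {w : List ℕ} {x y : ℕ} (h : Fac x y w) : y ∈ w :=
  h.subset (by simp)

theorem fac_map {w : List ℕ} {x y : ℕ} (σ : ℕ → ℕ) (hσ : ∀ a, σ (σ a) = a) :
    Fac x y (w.map σ) ↔ Fac (σ x) (σ y) w := by
  have hw : ∀ v : List ℕ, (v.map σ).map σ = v := by
    intro v; rw [List.map_map]
    have : σ ∘ σ = id := funext hσ
    rw [this, List.map_id]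
  constructor
  · intro h
    have := h.map σ
    simpa [hw, Fac] using this
  · intro h
    have := h.map σ
    simpa [hσ, Fac] using this

theorem fac3_map {w : List ℕ} {x y z : ℕ} (σ : ℕ → ℕ) (hσ : ∀ a, σ (σ a) = a) :
    Fac3 x y z (w.map σ) ↔ Fac3 (σ x) (σ y) (σ z) w := by
  have hw : ∀ v : List ℕ, (v.map σ).map σ = v := by
    intro v; rw [List.map_map]
    have : σ ∘ σ = id := funext hσ
    rw [this, List.map_id]
  constructor
  · intro h
    have := h.map σ
    simpa [hw, Fac3] using this
  · intro h
    have := h.map σ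
    simpa [hσ, Fac3] using this


open scoped Classical

/-- occurrence of an event: `inl i` = factor `(i+1, i)`, `inr i` = factor `(i+2, i, i+1)`. -/
def EvOcc (w : List ℕ) : ℕ ⊕ ℕ → Prop
  | Sum.inl i => Fac (i + 1) i w
  | Sum.inr i => Fac3 (i + 2) i (i + 1) w

noncomputable def occ (n : ℕ) (w : List ℕ) : Finset (ℕ ⊕ ℕ) :=
  (((Finset.range n).image Sum.inl) ∪ ((Finset.range n).image Sum.inr)).filter (EvOcc w)

theorem mem_occ_inl {n : ℕ} {w : List ℕ} {i : ℕ} :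
    Sum.inl i ∈ occ n w ↔ i < n ∧ Fac (i + 1) i w := by
  simp [occ, EvOcc]

theorem mem_occ_inr {n : ℕ} {w : List ℕ} {i : ℕ} :
    Sum.inr i ∈ occ n w ↔ i < n ∧ Fac3 (i + 2) i (i + 1) w := by
  simp [occ, EvOcc]

theorem mem_range'_iff {n x : ℕ} : x ∈ List.range' 1 n ↔ 1 ≤ x ∧ x < n + 1 := by
  rw [List.mem_range'_1]; omega

theorem perm_mem_iff {n : ℕ} {w : List ℕ} (hw : w ~ List.range' 1 n) {x : ℕ} :
    x ∈ w ↔ 1 ≤ x ∧ x ≤ n := by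
  rw [hw.mem_iff, mem_range'_iff]; omega

theorem perm_nodup {n : ℕ} {w : List ℕ} (hw : w ~ List.range' 1 n) : w.Nodup :=
  hw.nodup_iff.mpr (List.nodup_range' (s := 1) (n := n))

theorem map_swap_perm {n : ℕ} {w : List ℕ} (hw : w ~ List.range' 1 n) {i : ℕ}
    (h1 : 1 ≤ i) (h2 : i + 1 ≤ n) :
    w.map (Equiv.swap i (i + 1)) ~ List.range' 1 n := by
  set σ : ℕ → ℕ := ⇑(Equiv.swap i (i + 1)) with hσdef
  have hmem : ∀ x, σ x ∈ List.range' 1 n ↔ x ∈ List.range' 1 n := by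
    intro x
    rcases eq_or_ne x i with rfl | hxi
    · simp only [hσdef, Equiv.swap_apply_left, mem_range'_iff]; omega
    rcases eq_or_ne x (i + 1) with rfl | hxi1
    · simp only [hσdef, Equiv.swap_apply_right, mem_range'_iff]; omega
    · rw [hσdef, Equiv.swap_apply_of_ne_of_ne hxi hxi1]
  rw [List.perm_iff_count]
  intro a
  have hinj : Function.Injective σ := (Equiv.swap i (i + 1)).injective
  have : a = σ (σ a) := by simp [hσdef]
  rw [this, List.count_map_of_injective _ _ hinj]
  have hr : (List.range' 1 n).Nodup := List.nodup_range' (s := 1) (n := n)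
  have hwn : w.Nodup := perm_nodup hw
  rcases em (σ a ∈ w) with h | h
  · rw [List.count_eq_one_of_mem hwn h]
    have : σ (σ a) ∈ List.range' 1 n := by
      rw [hmem]; exact hw.mem_iff.mp h
    rw [List.count_eq_one_of_mem hr this]
  · rw [List.count_eq_zero.mpr h, Eq.comm, List.count_eq_zero]
    intro hc
    exact h (hw.mem_iff.mpr ((hmem _).mp hc))

theorem salient_iff_no_ev {w : List ℕ} :
    Salient w ↔ ∀ e, ¬ EvOcc w e := by
  constructor
  · rintro ⟨h1, h2⟩ (i | i)
    · rintro ⟨s, t, e⟩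
      exact h1 s t (i + 1) i (by rw [← e]; simp) rfl
    · rintro ⟨s, t, e⟩
      exact h2 s t (i + 2) i (i + 1) (by rw [← e]; simp) ⟨rfl, rfl⟩
  · intro h
    constructor
    · rintro p q x y e rfl
      exact h (Sum.inl y) ⟨p, q, by rw [e]; simp⟩
    · rintro p q x y z e ⟨rfl, hz⟩
      obtain rfl : z = y + 1 := by omega
      exact h (Sum.inr y) ⟨p, q, by rw [e]; simp⟩

theorem occ_empty_iff {n : ℕ} {w : List ℕ} (hw : w ~ List.range' 1 n) :
    occ n w = ∅ ↔ Salient w := by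
  rw [salient_iff_no_ev]
  constructor
  · intro h e he
    have hmem : e ∈ occ n w := by
      cases e with
      | inl i =>
        refine mem_occ_inl.mpr ⟨?_, he⟩
        have := (perm_mem_iff hw).mp (fac_mem_left he)
        omega
      | inr i =>
        refine mem_occ_inr.mpr ⟨?_, he⟩
        have := (perm_mem_iff hw).mp (fac_mem_left (fac3_left he))
        omega
    rw [h] at hmem; exact absurd hmem (Finset.notMem_empty _)
  · intro h
    rw [Finset.eq_empty_iff_forall_notMem]
    intro e he
    rw [occ, Finset.mem_filter] at he
    exact h e he.2

def Dft (T : Finset (ℕ ⊕ ℕ)) (i : ℕ) : Prop :=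
  Sum.inr i ∈ T ∨ (Sum.inl i ∈ T ∧ Sum.inl (i + 1) ∈ T)

def IsM (T : Finset (ℕ ⊕ ℕ)) : Prop := ∀ i, ¬ Dft T i

theorem not_isM_iff {T : Finset (ℕ ⊕ ℕ)} : ¬ IsM T ↔ ∃ i, Dft T i := by
  simp [IsM]

noncomputable def gfun (n : ℕ) (x : (_ : List ℕ) × Finset (ℕ ⊕ ℕ)) :
    (_ : List ℕ) × Finset (ℕ ⊕ ℕ) :=
  if h : ∃ i, Dft x.2 i then
    if Sum.inr (Nat.find h) ∈ x.2 then
      ⟨x.1.map (Equiv.swap (Nat.find h) (Nat.find h + 1)),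
        insert (Sum.inl (Nat.find h)) (insert (Sum.inl (Nat.find h + 1))
          (x.2.erase (Sum.inr (Nat.find h))))⟩
    else
      ⟨x.1.map (Equiv.swap (Nat.find h) (Nat.find h + 1)),
        insert (Sum.inr (Nat.find h))
          ((x.2.erase (Sum.inl (Nat.find h))).erase (Sum.inl (Nat.find h + 1)))⟩
  else x

theorem map_swap_invol (i : ℕ) (v : List ℕ) :
    (v.map (Equiv.swap i (i + 1))).map (Equiv.swap i (i + 1)) = v := by
  rw [List.map_map]
  have : (⇑(Equiv.swap i (i + 1)) ∘ ⇑(Equiv.swap i (i + 1))) = id :=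
    funext fun a => Equiv.swap_apply_self _ _ a
  rw [this, List.map_id]

theorem swap_self (i : ℕ) (a : ℕ) : Equiv.swap i (i + 1) (Equiv.swap i (i + 1) a) = a :=
  Equiv.swap_apply_self _ _ a

theorem fac_transfer {w : List ℕ} {i j : ℕ} (h1 : j ≠ i) (h2 : j ≠ i + 1) (h3 : j + 1 ≠ i)
    (hf : Fac (j + 1) j w) : Fac (j + 1) j (w.map (Equiv.swap i (i + 1))) := by
  rw [fac_map _ (swap_self i)]
  rw [Equiv.swap_apply_of_ne_of_ne h3 (by omega), Equiv.swap_apply_of_ne_of_ne h1 h2]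
  exact hf

theorem fac3_transfer {w : List ℕ} {i j : ℕ} (h1 : j ≠ i) (h2 : j ≠ i + 1) (h3 : j + 1 ≠ i)
    (h4 : j + 2 ≠ i) (hf : Fac3 (j + 2) j (j + 1) w) :
    Fac3 (j + 2) j (j + 1) (w.map (Equiv.swap i (i + 1))) := by
  rw [fac3_map _ (swap_self i)]
  rw [Equiv.swap_apply_of_ne_of_ne h4 (by omega),
    Equiv.swap_apply_of_ne_of_ne h1 h2, Equiv.swap_apply_of_ne_of_ne h3 (by omega)]
  exact hf

theorem gfun_spec {n : ℕ} {w : List ℕ} {T : Finset (ℕ ⊕ ℕ)}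
    (hw : w ~ List.range' 1 n) (hT : T ⊆ occ n w) (h : ∃ i, Dft T i) :
    (gfun n ⟨w, T⟩).1 ~ List.range' 1 n ∧ (gfun n ⟨w, T⟩).2 ⊆ occ n (gfun n ⟨w, T⟩).1 ∧
    (∃ i, Dft (gfun n ⟨w, T⟩).2 i) ∧ gfun n (gfun n ⟨w, T⟩) = ⟨w, T⟩ ∧
    ((gfun n ⟨w, T⟩).2.card = T.card + 1 ∨ T.card = (gfun n ⟨w, T⟩).2.card + 1) := by
  have hn : w.Nodup := perm_nodup hw
  set i := Nat.find h with hidef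
  have hdft : Dft T i := Nat.find_spec h
  have hmin : ∀ j, j < i → ¬ Dft T j := fun j hj => Nat.find_min h hj
  by_cases hB : Sum.inr i ∈ T
  · -- Case B : replace B_i by A_i, A_{i+1}
    have hocc : Fac3 (i + 2) i (i + 1) w := (mem_occ_inr.mp (hT hB)).2
    have hiltn : i < n := (mem_occ_inr.mp (hT hB)).1
    have hFi : Fac (i + 2) i w := fac3_left hocc
    have hFi1 : Fac i (i + 1) w := fac3_right hocc
    have hi1 : 1 ≤ i := by
      have := (perm_mem_iff hw).mp (fac_mem_right hFi); omega
    have hi2 : i + 2 ≤ n := by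
      have := (perm_mem_iff hw).mp (fac_mem_left hFi); omega
    have notAi : Sum.inl i ∉ T := by
      intro hc
      have hf : Fac (i + 1) i w := (mem_occ_inl.mp (hT hc)).2
      have := pred_unique hn hf hFi; omega
    have notAi1 : Sum.inl (i + 1) ∉ T := by
      intro hc
      have hf : Fac (i + 2) (i + 1) w := (mem_occ_inl.mp (hT hc)).2
      have := pred_unique hn hf hFi1; omega
    have notApred : ∀ j, j + 1 = i → Sum.inl j ∉ T := by
      intro j hj hc
      have hf : Fac (j + 1) j w := (mem_occ_inl.mp (hT hc)).2
      rw [hj] at hf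
      have := succ_unique hn hf hFi1; omega
    have notBi1 : Sum.inr (i + 1) ∉ T := by
      intro hc
      have hf : Fac3 (i + 3) (i + 1) (i + 2) w := (mem_occ_inr.mp (hT hc)).2
      have := pred_unique hn (fac3_left hf) hFi1; omega
    have notBlow : ∀ j, j < i → Sum.inr j ∉ T := fun j hj hc => hmin j hj (Or.inl hc)
    set w' := w.map (Equiv.swap i (i + 1)) with hw'def
    set T' : Finset (ℕ ⊕ ℕ) :=
      insert (Sum.inl i) (insert (Sum.inl (i + 1)) (T.erase (Sum.inr i))) with hT'def
    have hg : gfun n ⟨w, T⟩ = ⟨w', T'⟩ := by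
      rw [gfun]
      rw [dif_pos h, if_pos (show Sum.inr (Nat.find h) ∈ T from hidef ▸ hB)]
    have hnotmem1 : Sum.inl (i + 1) ∉ T.erase (Sum.inr i) := by
      intro hc; exact notAi1 (Finset.mem_of_mem_erase hc)
    have hnotmem2 : Sum.inl i ∉ insert (Sum.inl (i + 1)) (T.erase (Sum.inr i)) := by
      intro hc
      rcases Finset.mem_insert.mp hc with hc | hc
      · exact absurd hc (by simp)
      · exact notAi (Finset.mem_of_mem_erase hc)
    have hperm' : w' ~ List.range' 1 n := map_swap_perm hw hi1 (by omega)
    have hsub' : T' ⊆ occ n w' := by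
      intro e he
      rcases Finset.mem_insert.mp he with rfl | he
      · refine mem_occ_inl.mpr ⟨hiltn, ?_⟩
        rw [fac_map _ (swap_self i), Equiv.swap_apply_right, Equiv.swap_apply_left]
        exact hFi1
      rcases Finset.mem_insert.mp he with rfl | he
      · refine mem_occ_inl.mpr ⟨by omega, ?_⟩
        have e1 : Equiv.swap i (i + 1) (i + 1 + 1) = i + 2 :=
          Equiv.swap_apply_of_ne_of_ne (by omega) (by omega)
        rw [fac_map _ (swap_self i), e1, Equiv.swap_apply_right]
        exact hFi
      have heT : e ∈ T := Finset.mem_of_mem_erase he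
      have hene : e ≠ Sum.inr i := Finset.ne_of_mem_erase he
      cases e with
      | inl j =>
        have hf := mem_occ_inl.mp (hT heT)
        refine mem_occ_inl.mpr ⟨hf.1, ?_⟩
        refine fac_transfer ?_ ?_ ?_ hf.2
        · intro hc; exact notAi (hc ▸ heT)
        · intro hc; exact notAi1 (hc ▸ heT)
        · intro hc; exact notApred j hc heT
      | inr j =>
        have hf := mem_occ_inr.mp (hT heT)
        refine mem_occ_inr.mpr ⟨hf.1, ?_⟩
        refine fac3_transfer ?_ ?_ ?_ ?_ hf.2
        · intro hc; exact hene (by rw [hc])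
        · intro hc; exact notBi1 (hc ▸ heT)
        · intro hc; exact notBlow j (by omega) heT
        · intro hc; exact notBlow j (by omega) heT
    have hdft' : Dft T' i := Or.inr ⟨Finset.mem_insert_self _ _,
      Finset.mem_insert_of_mem (Finset.mem_insert_self _ _)⟩
    have hcard : T'.card = T.card + 1 := by
      have h1 : T.card ≠ 0 := Finset.card_ne_zero_of_mem hB
      rw [hT'def, Finset.card_insert_of_notMem hnotmem2,
        Finset.card_insert_of_notMem hnotmem1, Finset.card_erase_of_mem hB]
      omega
    have hmin' : ∀ j, j < i → ¬ Dft T' j := by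
      intro j hj hd
      have hne1 : (Sum.inr j : ℕ ⊕ ℕ) ≠ Sum.inl i := by simp
      have hne2 : (Sum.inr j : ℕ ⊕ ℕ) ≠ Sum.inl (i + 1) := by simp
      rcases hd with hd | ⟨hd1, hd2⟩
      · have : Sum.inr j ∈ T.erase (Sum.inr i) := by
          rcases Finset.mem_insert.mp hd with hc | hd
          · exact absurd hc hne1
          rcases Finset.mem_insert.mp hd with hc | hd
          · exact absurd hc hne2
          exact hd
        exact hmin j hj (Or.inl (Finset.mem_of_mem_erase this))
      · have hj1 : Sum.inl j ∈ T := by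
          rcases Finset.mem_insert.mp hd1 with hc | hd
          · exact absurd hc (by simp; omega)
          rcases Finset.mem_insert.mp hd with hc | hd
          · exact absurd hc (by simp; omega)
          · exact Finset.mem_of_mem_erase hd
        have hj2 : Sum.inl (j + 1) ∈ T := by
          rcases Finset.mem_insert.mp hd2 with hc | hd
          · exfalso
            have : j + 1 = i := by simpa using hc
            exact notApred j this hj1
          rcases Finset.mem_insert.mp hd with hc | hd
          · exfalso
            have hji : j = i := by simpa using hc
            omega
          · exact Finset.mem_of_mem_erase hd
        exact hmin j hj (Or.inr ⟨hj1, hj2⟩)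
    have h' : ∃ k, Dft T' k := ⟨i, hdft'⟩
    have hfind' : Nat.find h' = i := by
      rw [Nat.find_eq_iff]
      exact ⟨hdft', fun j hj => hmin' j hj⟩
    have hBnot' : Sum.inr i ∉ T' := by
      intro hc
      rcases Finset.mem_insert.mp hc with hc | hc
      · simp at hc
      rcases Finset.mem_insert.mp hc with hc | hc
      · simp at hc
      · exact (Finset.ne_of_mem_erase hc) rfl
    have hback : gfun n ⟨w', T'⟩ = ⟨w, T⟩ := by
      rw [gfun, dif_pos h']
      rw [if_neg (show ¬ Sum.inr (Nat.find h') ∈ T' by rw [hfind']; exact hBnot')]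
      rw [hfind']
      have e1 : (w'.map (Equiv.swap i (i + 1))) = w := map_swap_invol i w
      have e2 : (T'.erase (Sum.inl i)).erase (Sum.inl (i + 1)) = T.erase (Sum.inr i) := by
        rw [hT'def, Finset.erase_insert hnotmem2, Finset.erase_insert hnotmem1]
      have e3 : insert (Sum.inr i) ((T'.erase (Sum.inl i)).erase (Sum.inl (i + 1))) = T := by
        rw [e2, Finset.insert_erase hB]
      rw [e1, e3]
    rw [hg]
    exact ⟨hperm', hsub', ⟨i, hdft'⟩, hback, Or.inl hcard⟩
  · -- Case A : replace A_i, A_{i+1} by B_i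
    have hpair : Sum.inl i ∈ T ∧ Sum.inl (i + 1) ∈ T := by
      rcases hdft with hd | hd
      · exact absurd hd hB
      · exact hd
    obtain ⟨hAi, hAi1⟩ := hpair
    have hf1 : Fac (i + 1) i w := (mem_occ_inl.mp (hT hAi)).2
    have hiltn : i < n := (mem_occ_inl.mp (hT hAi)).1
    have hf2 : Fac (i + 2) (i + 1) w := (mem_occ_inl.mp (hT hAi1)).2
    have hocc3 : Fac3 (i + 2) (i + 1) i w := glue hn hf2 hf1
    have hi1 : 1 ≤ i := by
      have := (perm_mem_iff hw).mp (fac_mem_right hf1); omega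
    have hi2 : i + 2 ≤ n := by
      have := (perm_mem_iff hw).mp (fac_mem_left hf2); omega
    have notApred : ∀ j, j + 1 = i → Sum.inl j ∉ T := by
      intro j hj hc
      exact hmin j (by omega) (Or.inr ⟨hc, by rw [hj]; exact hAi⟩)
    have notBi1 : Sum.inr (i + 1) ∉ T := by
      intro hc
      have hf : Fac3 (i + 3) (i + 1) (i + 2) w := (mem_occ_inr.mp (hT hc)).2
      have := pred_unique hn (fac3_left hf) hf2; omega
    have notBlow : ∀ j, j < i → Sum.inr j ∉ T := fun j hj hc => hmin j hj (Or.inl hc)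
    set w' := w.map (Equiv.swap i (i + 1)) with hw'def
    set T' : Finset (ℕ ⊕ ℕ) :=
      insert (Sum.inr i) ((T.erase (Sum.inl i)).erase (Sum.inl (i + 1))) with hT'def
    have hg : gfun n ⟨w, T⟩ = ⟨w', T'⟩ := by
      rw [gfun]
      rw [dif_pos h, if_neg (show ¬ Sum.inr (Nat.find h) ∈ T from hidef ▸ hB)]
    have hmem1 : Sum.inl (i + 1) ∈ T.erase (Sum.inl i) :=
      Finset.mem_erase.mpr ⟨by simp, hAi1⟩
    have hnotmem2 : Sum.inr i ∉ (T.erase (Sum.inl i)).erase (Sum.inl (i + 1)) := by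
      intro hc; exact hB (Finset.mem_of_mem_erase (Finset.mem_of_mem_erase hc))
    have hperm' : w' ~ List.range' 1 n := map_swap_perm hw hi1 (by omega)
    have hsub' : T' ⊆ occ n w' := by
      intro e he
      rcases Finset.mem_insert.mp he with rfl | he
      · refine mem_occ_inr.mpr ⟨hiltn, ?_⟩
        have e1 : Equiv.swap i (i + 1) (i + 2) = i + 2 :=
          Equiv.swap_apply_of_ne_of_ne (by omega) (by omega)
        rw [fac3_map _ (swap_self i), e1, Equiv.swap_apply_left, Equiv.swap_apply_right]
        exact hocc3
      have heT : e ∈ T := Finset.mem_of_mem_erase (Finset.mem_of_mem_erase he)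
      have hene1 : e ≠ Sum.inl (i + 1) := Finset.ne_of_mem_erase he
      have hene2 : e ≠ Sum.inl i := Finset.ne_of_mem_erase (Finset.mem_of_mem_erase he)
      cases e with
      | inl j =>
        have hf := mem_occ_inl.mp (hT heT)
        refine mem_occ_inl.mpr ⟨hf.1, ?_⟩
        refine fac_transfer ?_ ?_ ?_ hf.2
        · intro hc; exact hene2 (by rw [hc])
        · intro hc; exact hene1 (by rw [hc])
        · intro hc; exact notApred j hc heT
      | inr j =>
        have hf := mem_occ_inr.mp (hT heT)
        refine mem_occ_inr.mpr ⟨hf.1, ?_⟩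
        refine fac3_transfer ?_ ?_ ?_ ?_ hf.2
        · intro hc; exact hB (hc ▸ heT)
        · intro hc; exact notBi1 (hc ▸ heT)
        · intro hc; exact notBlow j (by omega) heT
        · intro hc; exact notBlow j (by omega) heT
    have hdft' : Dft T' i := Or.inl (Finset.mem_insert_self _ _)
    have hcard : T.card = T'.card + 1 := by
      have h2 : 2 ≤ T.card := Finset.one_lt_card.mpr
        ⟨Sum.inl i, hAi, Sum.inl (i + 1), hAi1, by simp⟩
      rw [hT'def, Finset.card_insert_of_notMem hnotmem2,
        Finset.card_erase_of_mem hmem1, Finset.card_erase_of_mem hAi]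
      omega
    have hmin' : ∀ j, j < i → ¬ Dft T' j := by
      intro j hj hd
      rcases hd with hd | ⟨hd1, hd2⟩
      · have : Sum.inr j ∈ T := by
          rcases Finset.mem_insert.mp hd with hc | hd
          · exfalso
            have hji : j = i := by simpa using hc
            omega
          · exact Finset.mem_of_mem_erase (Finset.mem_of_mem_erase hd)
        exact hmin j hj (Or.inl this)
      · have hj1 : Sum.inl j ∈ T := by
          rcases Finset.mem_insert.mp hd1 with hc | hd
          · exact absurd hc (by simp)
          · exact Finset.mem_of_mem_erase (Finset.mem_of_mem_erase hd)
        have hj2 : Sum.inl (j + 1) ∈ T := by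
          rcases Finset.mem_insert.mp hd2 with hc | hd
          · exact absurd hc (by simp)
          · exact Finset.mem_of_mem_erase (Finset.mem_of_mem_erase hd)
        exact hmin j hj (Or.inr ⟨hj1, hj2⟩)
    have h' : ∃ k, Dft T' k := ⟨i, hdft'⟩
    have hfind' : Nat.find h' = i := by
      rw [Nat.find_eq_iff]
      exact ⟨hdft', fun j hj => hmin' j hj⟩
    have hBmem' : Sum.inr i ∈ T' := Finset.mem_insert_self _ _
    have hback : gfun n ⟨w', T'⟩ = ⟨w, T⟩ := by
      rw [gfun, dif_pos h']
      rw [if_pos (show Sum.inr (Nat.find h') ∈ T' by rw [hfind']; exact hBmem')]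
      rw [hfind']
      have e1 : (w'.map (Equiv.swap i (i + 1))) = w := map_swap_invol i w
      have e2 : T'.erase (Sum.inr i) = (T.erase (Sum.inl i)).erase (Sum.inl (i + 1)) := by
        rw [hT'def, Finset.erase_insert hnotmem2]
      have e3 : insert (Sum.inl i) (insert (Sum.inl (i + 1)) (T'.erase (Sum.inr i))) = T := by
        rw [e2, Finset.insert_erase hmem1, Finset.insert_erase hAi]
      rw [e1, e3]
    rw [hg]
    exact ⟨hperm', hsub', ⟨i, hdft'⟩, hback, Or.inr hcard⟩


/-- insert `a` right after the first occurrence of `a+1`. -/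
def ins (a : ℕ) : List ℕ → List ℕ
  | [] => []
  | x :: xs => if x = a + 1 then x :: a :: xs else x :: ins a xs

theorem ins_perm {a : ℕ} : ∀ {u : List ℕ}, a + 1 ∈ u → ins a u ~ a :: u := by
  intro u
  induction u with
  | nil => intro h; simp at h
  | cons x xs ih =>
    intro h
    rw [ins]
    by_cases hx : x = a + 1
    · rw [if_pos hx]
      subst hx
      exact List.Perm.swap a (a+1) xs
    · rw [if_neg hx]
      have hmem : a + 1 ∈ xs := by
        rcases List.mem_cons.mp h with h | h
        · exact absurd h.symm hx
        · exact h
      calc x :: ins a xs ~ x :: a :: xs := (ih hmem).cons x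
        _ ~ a :: x :: xs := List.Perm.swap a x xs

theorem ins_append_left {a : ℕ} : ∀ {s : List ℕ} (t : List ℕ), a + 1 ∈ s →
    ins a (s ++ t) = ins a s ++ t := by
  intro s
  induction s with
  | nil => intro t h; simp at h
  | cons x xs ih =>
    intro t h
    by_cases hx : x = a + 1
    · simp [ins, hx]
    · have hmem : a + 1 ∈ xs := by
        rcases List.mem_cons.mp h with h | h
        · exact absurd h.symm hx
        · exact h
      simp only [cons_append, ins, if_neg hx, List.append_eq, ih t hmem]

theorem ins_append_right {a : ℕ} : ∀ {s : List ℕ} (t : List ℕ), a + 1 ∉ s →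
    ins a (s ++ t) = s ++ ins a t := by
  intro s
  induction s with
  | nil => intro t _; simp
  | cons x xs ih =>
    intro t h
    have hx : x ≠ a + 1 := fun hc => h (hc ▸ List.mem_cons_self (a := x) (l := xs))
    have h2 : a + 1 ∉ xs := fun hc => h (List.mem_cons_of_mem _ hc)
    simp only [cons_append, ins, if_neg hx, List.append_eq, ih t h2]

theorem ins_fac {a x y : ℕ} {u : List ℕ} (hx : x ≠ a + 1) (hf : Fac x y u) :
    Fac x y (ins a u) := by
  obtain ⟨s, t, e⟩ := hf
  subst e
  by_cases hs : a + 1 ∈ s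
  · rw [List.append_assoc, ins_append_left _ hs]
    exact ⟨ins a s, t, by simp⟩
  · rw [List.append_assoc, ins_append_right _ hs]
    have e2 : ins a ([x, y] ++ t) = x :: ins a (y :: t) := by
      simp [ins, hx]
    rw [e2]
    by_cases hy : y = a + 1
    · rw [show ins a (y :: t) = y :: a :: t by simp [ins, hy]]
      exact ⟨s, a :: t, by simp⟩
    · rw [show ins a (y :: t) = y :: ins a t by simp [ins, hy]]
      exact ⟨s, ins a t, by simp⟩

theorem ins_creates {a : ℕ} : ∀ {u : List ℕ}, a + 1 ∈ u → Fac (a + 1) a (ins a u) := by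
  intro u
  induction u with
  | nil => intro h; simp at h
  | cons x xs ih =>
    intro h
    rw [ins]
    by_cases hx : x = a + 1
    · rw [if_pos hx, hx]
      exact ⟨[], xs, by simp⟩
    · rw [if_neg hx]
      have hmem : a + 1 ∈ xs := by
        rcases List.mem_cons.mp h with h | h
        · exact absurd h.symm hx
        · exact h
      exact (ih hmem).trans (by exact ⟨[x], [], by simp⟩ : ins a xs <:+: x :: ins a xs)

theorem ins_erase {a : ℕ} : ∀ {u : List ℕ}, a ∉ u → (ins a u).erase a = u := by
  intro u
  induction u with
  | nil => intro _; simp [ins]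
  | cons x xs ih =>
    intro h
    have hxa : x ≠ a := fun hc => h (hc ▸ List.mem_cons_self (a := x) (l := xs))
    have h2 : a ∉ xs := fun hc => h (List.mem_cons_of_mem _ hc)
    rw [ins]
    by_cases hx : x = a + 1
    · rw [if_pos hx, List.erase_cons_tail, List.erase_cons_head]
      simp [hxa]
    · rw [if_neg hx, List.erase_cons_tail, ih h2]
      simp [hxa]


theorem fac_erase {a x y : ℕ} {w : List ℕ} (hx : x ≠ a) (hy : y ≠ a) (hf : Fac x y w) :
    Fac x y (w.erase a) := by
  obtain ⟨s, t, e⟩ := hf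
  subst e
  by_cases hs : a ∈ s
  · rw [List.append_assoc, List.erase_append_left _ hs]
    exact ⟨s.erase a, t, by simp⟩
  · rw [List.append_assoc, List.erase_append_right _ hs]
    have e2 : ([x, y] ++ t).erase a = x :: y :: t.erase a := by
      rw [show ([x, y] ++ t) = x :: y :: t by simp]
      rw [List.erase_cons_tail, List.erase_cons_tail] <;> simp [hx, hy]
    rw [e2]
    exact ⟨s, t.erase a, by simp⟩

theorem ins_erase_of_fac {a : ℕ} {w : List ℕ} (hn : w.Nodup) (hf : Fac (a + 1) a w) :
    ins a (w.erase a) = w := by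
  obtain ⟨s, t, e⟩ := hf
  subst e
  have hnotmem : a ∉ s := by
    intro hc
    have := List.disjoint_of_nodup_append (by simpa using hn)
    exact this hc (by simp)
  have hnotmem1 : a + 1 ∉ s := by
    intro hc
    have := List.disjoint_of_nodup_append (by simpa using hn)
    exact this hc (by simp)
  have e1 : ((s ++ [a + 1, a]) ++ t).erase a = s ++ (a + 1) :: t := by
    rw [List.append_assoc, List.erase_append_right _ hnotmem]
    congr 1
    rw [show ([a + 1, a] ++ t) = (a + 1) :: a :: t by simp]
    rw [List.erase_cons_tail (by simp), List.erase_cons_head]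
  rw [e1, ins_append_right _ hnotmem1]
  simp [ins]

theorem count_fac : ∀ (S : Finset ℕ) (l : List ℕ), l.Nodup →
    (∀ i ∈ S, i ∈ l ∧ (i + 1) ∈ l ∧ (i + 1) ∉ S) →
    ((l.permutations.toFinset).filter (fun w => ∀ i ∈ S, Fac (i + 1) i w)).card
      = (l.length - S.card).factorial := by
  intro S
  induction S using Finset.induction_on with
  | empty =>
    intro l hl _
    rw [Finset.filter_true_of_mem (by intro w _; intro i hi; simp at hi)]
    rw [List.toFinset_card_of_nodup (List.nodup_permutations l hl), List.length_permutations]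
    simp
  | @insert a S' haS' ih =>
    intro l hl hS
    have hal : a ∈ l := (hS a (Finset.mem_insert_self _ _)).1
    have ha1l : a + 1 ∈ l := (hS a (Finset.mem_insert_self _ _)).2.1
    have ha1S : a + 1 ∉ insert a S' := (hS a (Finset.mem_insert_self _ _)).2.2
    have hS' : ∀ i ∈ S', i ∈ l.erase a ∧ (i + 1) ∈ l.erase a ∧ (i + 1) ∉ S' := by
      intro i hi
      obtain ⟨h1, h2, h3⟩ := hS i (Finset.mem_insert_of_mem hi)
      have hia : i ≠ a := fun hc => haS' (hc ▸ hi)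
      have hi1a : i + 1 ≠ a := fun hc => h3 (hc ▸ Finset.mem_insert_self _ _)
      exact ⟨(List.mem_erase_of_ne hia).mpr h1, (List.mem_erase_of_ne hi1a).mpr h2,
        fun hc => h3 (Finset.mem_insert_of_mem hc)⟩
    have key : ((l.permutations.toFinset).filter
          (fun w => ∀ i ∈ insert a S', Fac (i + 1) i w)).card
        = (((l.erase a).permutations.toFinset).filter
          (fun w => ∀ i ∈ S', Fac (i + 1) i w)).card := by
      refine Finset.card_bij' (fun w _ => w.erase a) (fun u _ => ins a u) ?_ ?_ ?_ ?_
      · intro w hw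
        rw [Finset.mem_filter, List.mem_toFinset, List.mem_permutations] at hw ⊢
        obtain ⟨hwp, hwf⟩ := hw
        refine ⟨hwp.erase a, ?_⟩
        intro i hi
        obtain ⟨h1, h2, h3⟩ := hS i (Finset.mem_insert_of_mem hi)
        have hia : i ≠ a := fun hc => haS' (hc ▸ hi)
        have hi1a : i + 1 ≠ a := fun hc => h3 (hc ▸ Finset.mem_insert_self _ _)
        exact fac_erase hi1a hia (hwf i (Finset.mem_insert_of_mem hi))
      · intro u hu
        rw [Finset.mem_filter, List.mem_toFinset, List.mem_permutations] at hu ⊢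
        obtain ⟨hup, huf⟩ := hu
        have ha1u : a + 1 ∈ u := hup.mem_iff.mpr
          ((List.mem_erase_of_ne (by omega)).mpr ha1l)
        constructor
        · exact ((ins_perm ha1u).trans (hup.cons a)).trans (List.perm_cons_erase hal).symm
        · intro i hi
          rcases Finset.mem_insert.mp hi with rfl | hi
          · exact ins_creates ha1u
          · have hia : i ≠ a := fun hc => haS' (hc ▸ hi)
            exact ins_fac (by omega) (huf i hi)
      · intro w hw
        rw [Finset.mem_filter, List.mem_toFinset, List.mem_permutations] at hw
        exact ins_erase_of_fac (hw.1.nodup_iff.mpr hl)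
          (hw.2 a (Finset.mem_insert_self _ _))
      · intro u hu
        rw [Finset.mem_filter, List.mem_toFinset, List.mem_permutations] at hu
        refine ins_erase ?_
        intro hc
        exact hl.not_mem_erase (hu.1.mem_iff.mp hc)
    rw [key, ih (l.erase a) (hl.erase a) hS']
    rw [List.length_erase_of_mem hal, Finset.card_insert_of_notMem haS']
    congr 1
    omega



noncomputable def mset (n j : ℕ) : Finset (Finset ℕ) :=
  ((Finset.Ico 1 n).powerset).filter (fun S => (∀ i ∈ S, i + 1 ∉ S) ∧ S.card = j)

theorem mset_card : ∀ n j : ℕ, (mset n j).card = (n - j).choose j := by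
  intro n
  induction n using Nat.strong_induction_on with
  | _ n ih =>
    match n with
    | 0 =>
      intro j
      have he : mset 0 j = if j = 0 then {∅} else ∅ := by
        rcases eq_or_ne j 0 with rfl | hj
        · rw [if_pos rfl]
          ext S
          simp only [mset, Finset.mem_filter, Finset.mem_powerset, Finset.mem_singleton]
          constructor
          · rintro ⟨h1, _, h3⟩
            exact Finset.card_eq_zero.mp h3
          · rintro rfl
            simp
        · rw [if_neg hj]
          ext S
          simp only [mset, Finset.mem_filter, Finset.mem_powerset, Finset.notMem_empty,
            iff_false, not_and]
          intro h1 _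
          intro hc
          have : S = ∅ := Finset.subset_empty.mp (by simpa using h1)
          subst this
          simp at hc
          omega
      rcases eq_or_ne j 0 with rfl | hj
      · rw [he, if_pos rfl]; simp
      · rw [he, if_neg hj]
        simp only [Finset.card_empty]
        rw [Eq.comm, Nat.choose_eq_zero_iff]  -- 0 = choose?  need (0-j).choose j = 0
        omega
    | 1 =>
      intro j
      have he : Finset.Ico 1 1 = ∅ := by simp
      have he2 : mset 1 j = if j = 0 then {∅} else ∅ := by
        rcases eq_or_ne j 0 with rfl | hj
        · rw [if_pos rfl]
          ext S
          simp only [mset, he, Finset.mem_filter, Finset.mem_powerset, Finset.mem_singleton,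
            Finset.subset_empty]
          constructor
          · rintro ⟨h1, _, _⟩; exact h1
          · rintro rfl; simp
        · rw [if_neg hj]
          ext S
          simp only [mset, he, Finset.mem_filter, Finset.mem_powerset, Finset.notMem_empty,
            iff_false, not_and, Finset.subset_empty]
          rintro rfl _
          simp
          omega
      rcases eq_or_ne j 0 with rfl | hj
      · rw [he2, if_pos rfl]; simp
      · rw [he2, if_neg hj]
        simp only [Finset.card_empty]
        rw [Eq.comm, Nat.choose_eq_zero_iff]
        omega
    | (m + 2) =>
      intro j
      have hsplit : (mset (m + 2) j).card
          = ((mset (m + 2) j).filter (fun S => m + 1 ∈ S)).card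
            + ((mset (m + 2) j).filter (fun S => m + 1 ∉ S)).card :=
        (Finset.card_filter_add_card_filter_not _).symm
      have hpart1 : (mset (m + 2) j).filter (fun S => m + 1 ∉ S) = mset (m + 1) j := by
        ext S
        simp only [mset, Finset.mem_filter, Finset.mem_powerset]
        constructor
        · rintro ⟨⟨h1, h2⟩, h3⟩
          refine ⟨?_, h2⟩
          intro i hi
          have := h1 hi
          simp only [Finset.mem_Ico] at this ⊢
          have : i ≠ m + 1 := fun hc => h3 (hc ▸ hi)
          omega
        · rintro ⟨h1, h2⟩
          have hsub : S ⊆ Finset.Ico 1 (m + 2) := by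
            intro i hi
            have := h1 hi
            simp only [Finset.mem_Ico] at this ⊢
            omega
          refine ⟨⟨hsub, h2⟩, ?_⟩
          intro hc
          have := h1 hc
          simp at this
      have hpart2 : ((mset (m + 2) j).filter (fun S => m + 1 ∈ S)).card
          = if j = 0 then 0 else (mset m (j - 1)).card := by
        rcases eq_or_ne j 0 with rfl | hj
        · rw [if_pos rfl]
          rw [Finset.card_eq_zero, Finset.filter_eq_empty_iff]
          intro S hS hc
          simp only [mset, Finset.mem_filter] at hS
          have := hS.2.2
          have : S ≠ ∅ := fun he => by simp [he] at hc
          exact this (Finset.card_eq_zero.mp hS.2.2)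
        · rw [if_neg hj]
          refine Finset.card_bij' (fun S _ => S.erase (m + 1)) (fun T _ => insert (m + 1) T)
            ?_ ?_ ?_ ?_
          · intro S hS
            simp only [Finset.mem_filter, mset, Finset.mem_powerset] at hS ⊢
            obtain ⟨⟨⟨hsub, hnadj, hcard⟩, hmem⟩⟩ := And.intro hS trivial
            refine ⟨?_, ?_, ?_⟩
            · intro i hi
              have hiS := Finset.mem_of_mem_erase hi
              have hine := Finset.ne_of_mem_erase hi
              have := hsub hiS
              simp only [Finset.mem_Ico] at this ⊢
              have him : i ≠ m := by
                rintro rfl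
                exact (hnadj i hiS) hmem
              omega
            · intro i hi
              intro hc
              exact (hnadj i (Finset.mem_of_mem_erase hi)) (Finset.mem_of_mem_erase hc)
            · rw [Finset.card_erase_of_mem hmem, hcard]
          · intro T hT
            simp only [Finset.mem_filter, mset, Finset.mem_powerset] at hT ⊢
            obtain ⟨hsub, hnadj, hcard⟩ := hT
            have hm1T : m + 1 ∉ T := by
              intro hc
              have := hsub hc
              simp only [Finset.mem_Ico] at this
              omega
            refine ⟨⟨?_, ?_, ?_⟩, Finset.mem_insert_self _ _⟩
            · intro i hi
              rcases Finset.mem_insert.mp hi with rfl | hi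
              · simp only [Finset.mem_Ico]; omega
              · have := hsub hi
                simp only [Finset.mem_Ico] at this ⊢
                omega
            · intro i hi hc
              rcases Finset.mem_insert.mp hi with rfl | hi
              · rcases Finset.mem_insert.mp hc with hc | hc
                · omega
                · have := hsub hc
                  simp only [Finset.mem_Ico] at this
                  omega
              · rcases Finset.mem_insert.mp hc with hc | hc
                · have := hsub hi
                  simp only [Finset.mem_Ico] at this
                  omega
                · exact (hnadj i hi) hc
            · rw [Finset.card_insert_of_notMem hm1T, hcard]
              omega
          · intro S hS
            simp only [Finset.mem_filter] at hS
            exact Finset.insert_erase hS.2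
          · intro T hT
            simp only [Finset.mem_filter, mset, Finset.mem_powerset] at hT
            have hm1T : m + 1 ∉ T := by
              intro hc
              have := hT.1 hc
              simp only [Finset.mem_Ico] at this
              omega
            exact Finset.erase_insert hm1T
      rw [hsplit, hpart1, hpart2, ih (m + 1) (by omega) j]
      rcases eq_or_ne j 0 with rfl | hj
      · simp
      · rw [if_neg hj, ih m (by omega) (j - 1)]
        obtain ⟨j', rfl⟩ : ∃ j', j = j' + 1 := ⟨j - 1, by omega⟩
        simp only [Nat.add_sub_cancel]
        rcases le_or_gt j' m with hle | hlt
        · have e1 : m + 2 - (j' + 1) = (m - j') + 1 := by omega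
          have e2 : m + 1 - (j' + 1) = m - j' := by omega
          rw [e1, e2, Nat.choose_succ_succ]
        · have z1 : (m + 2 - (j' + 1)).choose (j' + 1) = 0 :=
            Nat.choose_eq_zero_of_lt (by omega)
          have z2 : (m + 1 - (j' + 1)).choose (j' + 1) = 0 :=
            Nat.choose_eq_zero_of_lt (by omega)
          have z3 : (m - j').choose j' = 0 := Nat.choose_eq_zero_of_lt (by omega)
          omega
      

noncomputable def P (n : ℕ) : Finset (List ℕ) := (List.range' 1 n).permutations.toFinset

theorem mem_P {n : ℕ} {w : List ℕ} : w ∈ P n ↔ w ~ List.range' 1 n := by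
  rw [P, List.mem_toFinset, List.mem_permutations]

theorem main (n : ℕ) :
    ((((P n).filter (fun w => Salient w)).card : ℤ)) =
      ∑ j ∈ Finset.range (n / 2 + 1),
        (-1 : ℤ) ^ j * (n - j).factorial * Nat.choose (n - j) j := by
  -- Step A
  have stepA : ((((P n).filter (fun w => Salient w)).card : ℤ)) =
      ∑ w ∈ P n, ∑ T ∈ (occ n w).powerset, (-1 : ℤ) ^ T.card := by
    rw [← Finset.sum_boole]
    refine Finset.sum_congr rfl ?_
    intro w hw
    rw [Finset.sum_powerset_neg_one_pow_card]
    by_cases hs : Salient w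
    · rw [if_pos hs, if_pos ((occ_empty_iff (mem_P.mp hw)).mpr hs)]
    · rw [if_neg hs, if_neg (fun hc => hs ((occ_empty_iff (mem_P.mp hw)).mp hc))]
  -- Step B/C : sigma and involution
  have stepB : ∑ w ∈ P n, ∑ T ∈ (occ n w).powerset, (-1 : ℤ) ^ T.card =
      ∑ x ∈ (P n).sigma (fun w => (occ n w).powerset), (-1 : ℤ) ^ x.2.card := by
    rw [Finset.sum_sigma]
  set s : Finset ((_ : List ℕ) × Finset (ℕ ⊕ ℕ)) := (P n).sigma (fun w => (occ n w).powerset)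
    with hsdef
  have stepC : ∑ x ∈ s.filter (fun x => ¬ IsM x.2), (-1 : ℤ) ^ x.2.card = 0 := by
    refine Finset.sum_involution (fun x _ => gfun n x) ?_ ?_ ?_ ?_
    · intro x hx
      rw [Finset.mem_filter, Finset.mem_sigma] at hx
      obtain ⟨⟨hx1, hx2⟩, hx3⟩ := hx
      obtain ⟨w, T⟩ := x
      obtain ⟨_, _, _, _, hcard⟩ := gfun_spec (mem_P.mp hx1) (Finset.mem_powerset.mp hx2)
        (not_isM_iff.mp hx3)
      rcases hcard with hc | hc <;> rw [hc] <;> ring_nf <;> rw [pow_succ] <;> ring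
    · intro x hx _
      rw [Finset.mem_filter, Finset.mem_sigma] at hx
      obtain ⟨⟨hx1, hx2⟩, hx3⟩ := hx
      obtain ⟨w, T⟩ := x
      obtain ⟨_, _, _, _, hcard⟩ := gfun_spec (mem_P.mp hx1) (Finset.mem_powerset.mp hx2)
        (not_isM_iff.mp hx3)
      intro hc
      replace hc : gfun n ⟨w, T⟩ = ⟨w, T⟩ := hc
      rw [hc] at hcard
      omega
    · intro x hx
      rw [Finset.mem_filter, Finset.mem_sigma] at hx ⊢
      obtain ⟨⟨hx1, hx2⟩, hx3⟩ := hx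
      obtain ⟨w, T⟩ := x
      obtain ⟨h1, h2, h3, _, _⟩ := gfun_spec (mem_P.mp hx1) (Finset.mem_powerset.mp hx2)
        (not_isM_iff.mp hx3)
      exact ⟨⟨mem_P.mpr h1, Finset.mem_powerset.mpr h2⟩, not_isM_iff.mpr h3⟩
    · intro x hx
      rw [Finset.mem_filter, Finset.mem_sigma] at hx
      obtain ⟨⟨hx1, hx2⟩, hx3⟩ := hx
      obtain ⟨w, T⟩ := x
      obtain ⟨_, _, _, h4, _⟩ := gfun_spec (mem_P.mp hx1) (Finset.mem_powerset.mp hx2)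
        (not_isM_iff.mp hx3)
      exact h4
  have stepC2 : ∑ x ∈ s, (-1 : ℤ) ^ x.2.card =
      ∑ x ∈ s.filter (fun x => IsM x.2), (-1 : ℤ) ^ x.2.card := by
    rw [← Finset.sum_filter_add_sum_filter_not s (fun x => IsM x.2), stepC, add_zero]
  -- Step D : back to double sum
  have stepD : s.filter (fun x => IsM x.2) =
      (P n).sigma (fun w => (occ n w).powerset.filter (fun T => IsM T)) := by
    ext ⟨w, T⟩
    simp only [hsdef, Finset.mem_filter, Finset.mem_sigma]
    tauto
  -- Step E : per w, reindex matchings by Finset ℕ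
  have stepE : ∀ w ∈ P n,
      ∑ T ∈ (occ n w).powerset.filter (fun T => IsM T), (-1 : ℤ) ^ T.card =
      ∑ S ∈ (((Finset.range n).filter (fun i => Fac (i + 1) i w)).powerset).filter
          (fun S => ∀ i ∈ S, i + 1 ∉ S), (-1 : ℤ) ^ S.card := by
    intro w hw
    refine (Finset.sum_bij' (fun S _ => S.image Sum.inl)
      (fun T _ => (Finset.range n).filter (fun k => Sum.inl k ∈ T)) ?_ ?_ ?_ ?_ ?_).symm
    · -- maps to
      intro S hS
      rw [Finset.mem_filter, Finset.mem_powerset] at hS ⊢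
      obtain ⟨hsub, hnadj⟩ := hS
      constructor
      · intro e he
        rw [Finset.mem_image] at he
        obtain ⟨i, hi, rfl⟩ := he
        have := hsub hi
        rw [Finset.mem_filter, Finset.mem_range] at this
        exact mem_occ_inl.mpr ⟨this.1, this.2⟩
      · intro k
        rw [Dft]
        push_neg
        constructor
        · intro hc
          rw [Finset.mem_image] at hc
          obtain ⟨i, _, hi2⟩ := hc
          simp at hi2
        · intro h1 h2
          rw [Finset.mem_image] at h1 h2
          obtain ⟨i1, hi1, he1⟩ := h1
          obtain ⟨i2, hi2, he2⟩ := h2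
          have e1 : i1 = k := by simpa using he1
          have e2 : i2 = k + 1 := by simpa using he2
          subst e1; subst e2
          exact (hnadj i1 hi1) hi2
    · -- inverse maps to
      intro T hT
      rw [Finset.mem_filter, Finset.mem_powerset] at hT ⊢
      obtain ⟨hsub, hM⟩ := hT
      constructor
      · intro i hi
        rw [Finset.mem_filter, Finset.mem_range] at hi ⊢
        have := mem_occ_inl.mp (hsub hi.2)
        exact ⟨this.1, this.2⟩
      · intro i hi hc
        rw [Finset.mem_filter] at hi hc
        exact (hM i) (Or.inr ⟨hi.2, hc.2⟩)
    · -- left inverse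
      intro S hS
      rw [Finset.mem_filter, Finset.mem_powerset] at hS
      ext i
      rw [Finset.mem_filter, Finset.mem_range, Finset.mem_image]
      constructor
      · rintro ⟨_, j, hj, he⟩
        have : j = i := by simpa using he
        exact this ▸ hj
      · intro hi
        have := hS.1 hi
        rw [Finset.mem_filter, Finset.mem_range] at this
        exact ⟨this.1, i, hi, rfl⟩
    · -- right inverse
      intro T hT
      rw [Finset.mem_filter, Finset.mem_powerset] at hT
      ext e
      rw [Finset.mem_image]
      constructor
      · rintro ⟨i, hi, rfl⟩
        rw [Finset.mem_filter] at hi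
        exact hi.2
      · intro he
        cases e with
        | inl i =>
          refine ⟨i, ?_, rfl⟩
          rw [Finset.mem_filter, Finset.mem_range]
          exact ⟨(mem_occ_inl.mp (hT.1 he)).1, he⟩
        | inr i => exact absurd (Or.inl he) (hT.2 i)
    · -- values
      intro S hS
      rw [Finset.card_image_of_injective S Sum.inl_injective]
  -- Step F : swap sums
  set bigS : Finset (Finset ℕ) :=
    ((Finset.range n).powerset).filter (fun S => ∀ i ∈ S, i + 1 ∉ S) with hbigSdef
  have stepF : ∑ w ∈ P n,
      ∑ S ∈ (((Finset.range n).filter (fun i => Fac (i + 1) i w)).powerset).filter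
          (fun S => ∀ i ∈ S, i + 1 ∉ S), (-1 : ℤ) ^ S.card =
      ∑ S ∈ bigS, (-1 : ℤ) ^ S.card *
        (((P n).filter (fun w => ∀ i ∈ S, Fac (i + 1) i w)).card : ℤ) := by
    have hfam : ∀ w : List ℕ,
        (((Finset.range n).filter (fun i => Fac (i + 1) i w)).powerset).filter
          (fun S => ∀ i ∈ S, i + 1 ∉ S) =
        bigS.filter (fun S => ∀ i ∈ S, Fac (i + 1) i w) := by
      intro w
      ext S
      constructor
      · intro h
        rw [Finset.mem_filter, Finset.mem_powerset] at h
        rw [Finset.mem_filter]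
        refine ⟨?_, fun i hi => (Finset.mem_filter.mp (h.1 hi)).2⟩
        rw [hbigSdef, Finset.mem_filter, Finset.mem_powerset]
        exact ⟨fun i hi => (Finset.mem_filter.mp (h.1 hi)).1, h.2⟩
      · intro h
        rw [Finset.mem_filter, hbigSdef, Finset.mem_filter, Finset.mem_powerset] at h
        rw [Finset.mem_filter, Finset.mem_powerset]
        refine ⟨fun i hi => ?_, h.1.2⟩
        rw [Finset.mem_filter]
        exact ⟨h.1.1 hi, h.2 i hi⟩
    calc ∑ w ∈ P n, ∑ S ∈ (((Finset.range n).filter (fun i => Fac (i + 1) i w)).powerset).filter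
          (fun S => ∀ i ∈ S, i + 1 ∉ S), (-1 : ℤ) ^ S.card
        = ∑ w ∈ P n, ∑ S ∈ bigS,
            if (∀ i ∈ S, Fac (i + 1) i w) then (-1 : ℤ) ^ S.card else 0 := by
          refine Finset.sum_congr rfl ?_
          intro w _
          rw [hfam w, Finset.sum_filter]
      _ = ∑ S ∈ bigS, ∑ w ∈ P n,
            if (∀ i ∈ S, Fac (i + 1) i w) then (-1 : ℤ) ^ S.card else 0 := Finset.sum_comm
      _ = ∑ S ∈ bigS, (-1 : ℤ) ^ S.card *
            (((P n).filter (fun w => ∀ i ∈ S, Fac (i + 1) i w)).card : ℤ) := by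
          refine Finset.sum_congr rfl ?_
          intro S _
          rw [← Finset.sum_filter, Finset.sum_const, nsmul_eq_mul, mul_comm]
  -- Step G : evaluate the inner counts
  have stepG : ∀ S ∈ bigS, (((P n).filter (fun w => ∀ i ∈ S, Fac (i + 1) i w)).card : ℤ)
      = if 0 ∈ S then 0 else ((n - S.card).factorial : ℤ) := by
    intro S hS
    rw [hbigSdef, Finset.mem_filter, Finset.mem_powerset] at hS
    by_cases h0 : 0 ∈ S
    · rw [if_pos h0]
      norm_cast
      rw [Finset.card_eq_zero, Finset.filter_eq_empty_iff]
      intro w hw hc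
      have hf := hc 0 h0
      have h0w : (0 : ℕ) ∈ w := fac_mem_right hf
      have := (perm_mem_iff (mem_P.mp hw)).mp h0w
      omega
    · rw [if_neg h0]
      have hcond : ∀ i ∈ S, i ∈ List.range' 1 n ∧ (i + 1) ∈ List.range' 1 n ∧ (i + 1) ∉ S := by
        intro i hi
        have hin : i < n := Finset.mem_range.mp (hS.1 hi)
        have hi0 : i ≠ 0 := fun hc => h0 (hc ▸ hi)
        exact ⟨mem_range'_iff.mpr ⟨by omega, by omega⟩,
          mem_range'_iff.mpr ⟨by omega, by omega⟩, hS.2 i hi⟩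
      have := count_fac S (List.range' 1 n) (List.nodup_range' (s := 1) (n := n)) hcond
      rw [List.length_range'] at this
      rw [P]
      norm_cast
  -- Step G2 : kill the 0 ∈ S part and restrict
  set M : Finset (Finset ℕ) :=
    ((Finset.Ico 1 n).powerset).filter (fun S => ∀ i ∈ S, i + 1 ∉ S) with hMdef
  have hMeq : bigS.filter (fun S => 0 ∉ S) = M := by
    ext S
    rw [Finset.mem_filter, hbigSdef, Finset.mem_filter, Finset.mem_powerset,
      hMdef, Finset.mem_filter, Finset.mem_powerset]
    constructor
    · rintro ⟨⟨h1, h2⟩, h3⟩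
      refine ⟨fun i hi => ?_, h2⟩
      have := Finset.mem_range.mp (h1 hi)
      have : i ≠ 0 := fun hc => h3 (hc ▸ hi)
      rw [Finset.mem_Ico]
      omega
    · rintro ⟨h1, h2⟩
      refine ⟨⟨fun i hi => ?_, h2⟩, fun hc => ?_⟩
      · have := Finset.mem_Ico.mp (h1 hi)
        rw [Finset.mem_range]; omega
      · have := Finset.mem_Ico.mp (h1 hc)
        omega
  have stepG2 : ∑ S ∈ bigS, (-1 : ℤ) ^ S.card *
        (((P n).filter (fun w => ∀ i ∈ S, Fac (i + 1) i w)).card : ℤ)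
      = ∑ S ∈ M, (-1 : ℤ) ^ S.card * ((n - S.card).factorial : ℤ) := by
    rw [← Finset.sum_filter_add_sum_filter_not bigS (fun S => 0 ∈ S)]
    have hzero : ∑ S ∈ bigS.filter (fun S => 0 ∈ S), (-1 : ℤ) ^ S.card *
        (((P n).filter (fun w => ∀ i ∈ S, Fac (i + 1) i w)).card : ℤ) = 0 := by
      refine Finset.sum_eq_zero ?_
      intro S hS
      rw [Finset.mem_filter] at hS
      rw [stepG S hS.1, if_pos hS.2, mul_zero]
    rw [hzero, zero_add, ← hMeq]
    refine Finset.sum_congr rfl ?_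
    intro S hS
    rw [Finset.mem_filter] at hS
    rw [stepG S hS.1, if_neg hS.2]
  -- Step H : group by cardinality
  have stepH : ∑ S ∈ M, (-1 : ℤ) ^ S.card * ((n - S.card).factorial : ℤ)
      = ∑ j ∈ Finset.range (n + 1),
          (-1 : ℤ) ^ j * ((n - j).factorial : ℤ) * (Nat.choose (n - j) j : ℤ) := by
    have hmaps : ∀ S ∈ M, S.card ∈ Finset.range (n + 1) := by
      intro S hS
      rw [hMdef, Finset.mem_filter, Finset.mem_powerset] at hS
      rw [Finset.mem_range]
      have := Finset.card_le_card hS.1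
      rw [Nat.card_Ico] at this
      omega
    rw [← Finset.sum_fiberwise_of_maps_to hmaps
      (fun S => (-1 : ℤ) ^ S.card * ((n - S.card).factorial : ℤ))]
    refine Finset.sum_congr rfl ?_
    intro j _
    have hconst : ∑ S ∈ M.filter (fun S => S.card = j),
        (-1 : ℤ) ^ S.card * ((n - S.card).factorial : ℤ)
        = ∑ S ∈ M.filter (fun S => S.card = j),
            (-1 : ℤ) ^ j * ((n - j).factorial : ℤ) := by
      refine Finset.sum_congr rfl ?_
      intro S hS
      rw [Finset.mem_filter] at hS
      rw [hS.2]
    rw [hconst, Finset.sum_const, nsmul_eq_mul]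
    have hcount : (M.filter (fun S => S.card = j)).card = Nat.choose (n - j) j := by
      have : M.filter (fun S => S.card = j) = mset n j := by
        rw [hMdef, mset, Finset.filter_filter]
      rw [this, mset_card]
    rw [hcount]
    ring
  -- Step I : trim the summation range
  have stepI : ∑ j ∈ Finset.range (n + 1),
        (-1 : ℤ) ^ j * ((n - j).factorial : ℤ) * (Nat.choose (n - j) j : ℤ)
      = ∑ j ∈ Finset.range (n / 2 + 1),
          (-1 : ℤ) ^ j * ((n - j).factorial : ℤ) * (Nat.choose (n - j) j : ℤ) := by
    refine (Finset.sum_subset ?_ ?_).symm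
    · intro j hj
      rw [Finset.mem_range] at hj ⊢
      omega
    · intro j hj1 hj2
      rw [Finset.mem_range] at hj1 hj2
      have : Nat.choose (n - j) j = 0 := Nat.choose_eq_zero_of_lt (by omega)
      rw [this]
      push_cast
      ring
  rw [stepA, stepB, stepC2, stepD, Finset.sum_sigma, ← stepI, ← stepH, ← stepG2, ← stepF]
  refine Finset.sum_congr rfl ?_
  intro w hw
  exact stepE w hw

theorem fac_iff {w : List ℕ} {x y : ℕ} :
    Fac x y w ↔ ∃ p q, w = p ++ x :: y :: q := by
  constructor
  · rintro ⟨s, t, e⟩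
    exact ⟨s, t, by rw [← e]; simp⟩
  · rintro ⟨p, q, e⟩
    exact ⟨p, q, by rw [e]; simp⟩

theorem fac3_iff {w : List ℕ} {x y z : ℕ} :
    Fac3 x y z w ↔ ∃ p q, w = p ++ x :: y :: z :: q := by
  constructor
  · rintro ⟨s, t, e⟩
    exact ⟨s, t, by rw [← e]; simp⟩
  · rintro ⟨p, q, e⟩
    exact ⟨p, q, by rw [e]; simp⟩

theorem salient_iff_cond (w : List ℕ) : Salient w ↔ ∀ i : ℕ,
    (¬ ∃ p q : List ℕ, w = p ++ (i + 1) :: i :: q) ∧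
    (¬ ∃ p q : List ℕ, w = p ++ (i + 2) :: i :: (i + 1) :: q) := by
  rw [salient_iff_no_ev]
  constructor
  · intro h i
    exact ⟨fun hc => h (Sum.inl i) (fac_iff.mpr hc), fun hc => h (Sum.inr i) (fac3_iff.mpr hc)⟩
  · intro h e
    cases e with
    | inl i => exact fun hc => (h i).1 (fac_iff.mp hc)
    | inr i => exact fun hc => (h i).2 (fac3_iff.mp hc)

end Stmt4

/-- The number of salient permutations in `Sₙ` equals
`∑_{j=0}^{⌊n/2⌋} (-1)^j (n-j)! C(n-j, j)`; consequently, so does the number of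
permutations of `1,…,n` that contain no factor (consecutive entries) `i+1, i`
and no factor `i+2, i, i+1`. -/
theorem stmt4 (n : ℕ) :
    (Set.ncard {w : List ℕ | w.Perm (List.range' 1 n) ∧ Salient w} : ℤ) =
      (∑ j ∈ Finset.range (n / 2 + 1),
        (-1 : ℤ) ^ j * (n - j).factorial * Nat.choose (n - j) j) ∧
    (Set.ncard {w : List ℕ | w.Perm (List.range' 1 n) ∧ ∀ i : ℕ,
        (¬ ∃ p q : List ℕ, w = p ++ (i + 1) :: i :: q) ∧
        (¬ ∃ p q : List ℕ, w = p ++ (i + 2) :: i :: (i + 1) :: q)} : ℤ) =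
      ∑ j ∈ Finset.range (n / 2 + 1),
        (-1 : ℤ) ^ j * (n - j).factorial * Nat.choose (n - j) j := by
  classical
  have hset : {w : List ℕ | w.Perm (List.range' 1 n) ∧ Salient w} =
      ↑((Stmt4.P n).filter (fun w => Salient w)) := by
    ext w
    simp only [Set.mem_setOf_eq, Finset.coe_filter, Stmt4.mem_P]
  have h1 : (Set.ncard {w : List ℕ | w.Perm (List.range' 1 n) ∧ Salient w} : ℤ) =
      ∑ j ∈ Finset.range (n / 2 + 1),
        (-1 : ℤ) ^ j * (n - j).factorial * Nat.choose (n - j) j := by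
    rw [hset, Set.ncard_coe_finset]
    exact Stmt4.main n
  refine ⟨h1, ?_⟩
  have hsame : {w : List ℕ | w.Perm (List.range' 1 n) ∧ ∀ i : ℕ,
        (¬ ∃ p q : List ℕ, w = p ++ (i + 1) :: i :: q) ∧
        (¬ ∃ p q : List ℕ, w = p ++ (i + 2) :: i :: (i + 1) :: q)} =
      {w : List ℕ | w.Perm (List.range' 1 n) ∧ Salient w} := by
    ext w
    simp only [Set.mem_setOf_eq]
    constructor
    · rintro ⟨hp, hc⟩
      exact ⟨hp, (Stmt4.salient_iff_cond w).mpr hc⟩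
    · rintro ⟨hp, hc⟩
      exact ⟨hp, (Stmt4.salient_iff_cond w).mp hc⟩
  rw [hsame]
  exact h1
end

section
/- Let ⟨id_n⟩ denote the equivalence class of the identity permutation 1 2 ⋯ n under the relation ∼ on S_n, and let ⟨id̄_n⟩ denote the class of its reverse n ⋯ 2 1. Then #⟨id_n⟩ = #⟨id̄_n⟩ = F_{n+1}, the (n+1)-st Fibonacci number. -/
lemma adjswap1_symm {u v : List ℕ} (h : AdjSwap1 u v) : AdjSwap1 v u := by
  obtain ⟨p, q, x, y, h1, h2, h3⟩ := h
  exact ⟨p, q, y, x, by omega, h3, h2⟩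

lemma adjswap1_cons {u v : List ℕ} (a : ℕ) (h : AdjSwap1 u v) : AdjSwap1 (a :: u) (a :: v) := by
  obtain ⟨p, q, x, y, h1, h2, h3⟩ := h
  exact ⟨a :: p, q, x, y, h1, by simp [h2], by simp [h3]⟩

lemma adjswap1_length {u v : List ℕ} (h : AdjSwap1 u v) : u.length = v.length := by
  obtain ⟨p, q, x, y, h1, h2, h3⟩ := h
  simp [h2, h3]

lemma adjswap1_reverse {u v : List ℕ} (h : AdjSwap1 u v) :
    AdjSwap1 u.reverse v.reverse := by
  obtain ⟨p, q, x, y, h1, h2, h3⟩ := h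
  refine ⟨q.reverse, p.reverse, y, x, by omega, ?_, ?_⟩
  · subst h2; simp
  · subst h3; simp

lemma adjswap1_head (k : ℕ) (t : List ℕ) :
    AdjSwap1 (k :: (k + 1) :: t) ((k + 1) :: k :: t) :=
  ⟨[], t, k, k + 1, by omega, rfl, rfl⟩

/-- Words made of blocks `[k]` or `[k+1, k]` with values increasing along the word. -/
inductive Good : ℕ → List ℕ → Prop
  | nil (k : ℕ) : Good k []
  | single (k : ℕ) {w : List ℕ} : Good (k + 1) w → Good k (k :: w)
  | pair (k : ℕ) {w : List ℕ} : Good (k + 2) w → Good k ((k + 1) :: k :: w)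

lemma good_swap : ∀ {k : ℕ} {u v : List ℕ}, Good k u → AdjSwap1 u v → Good k v := by
  intro k u v hg
  induction hg generalizing v with
  | nil k =>
    rintro ⟨p, q, x, y, h1, h2, h3⟩
    simp at h2
  | single k hw ih =>
    rintro ⟨p, q, x, y, h1, h2, h3⟩
    cases p with
    | nil =>
      simp only [List.nil_append] at h2 h3
      obtain ⟨rfl, rfl⟩ : k = x ∧ _ = y :: q := by
        injection h2 with a b; exact ⟨a, b⟩
      subst h3
      cases hw with
      | single _ hw' =>
        exact Good.pair k hw'
      | pair _ hw' =>
        omega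
    | cons a p' =>
      obtain ⟨rfl, rfl⟩ : k = a ∧ _ = p' ++ x :: y :: q := by
        injection h2 with h2a h2b; exact ⟨h2a, h2b⟩
      subst h3
      exact Good.single k (ih ⟨p', q, x, y, h1, rfl, rfl⟩)
  | pair k hw ih =>
    rintro ⟨p, q, x, y, h1, h2, h3⟩
    cases p with
    | nil =>
      simp only [List.nil_append] at h2 h3
      obtain ⟨rfl, h2b⟩ : k + 1 = x ∧ k :: _ = y :: q := by
        injection h2 with a b; exact ⟨a, b⟩
      obtain ⟨rfl, rfl⟩ : k = y ∧ _ = q := by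
        injection h2b with a b; exact ⟨a, b⟩
      subst h3
      exact Good.single k (Good.single (k + 1) hw)
    | cons a p' =>
      obtain ⟨rfl, h2b⟩ : k + 1 = a ∧ k :: _ = p' ++ x :: y :: q := by
        injection h2 with ha hb; exact ⟨ha, hb⟩
      cases p' with
      | nil =>
        simp only [List.nil_append] at h2b h3
        obtain ⟨rfl, rfl⟩ : k = x ∧ _ = y :: q := by
          injection h2b with a b; exact ⟨a, b⟩
        cases hw with
        | single => omega
        | pair => omega
      | cons b p'' =>
        obtain ⟨rfl, rfl⟩ : k = b ∧ _ = p'' ++ x :: y :: q := by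
          injection h2b with a c; exact ⟨a, c⟩
        subst h3
        exact Good.pair k (ih ⟨p'', q, x, y, h1, rfl, rfl⟩)

lemma good_range' : ∀ (n k : ℕ), Good k (List.range' k n) := by
  intro n
  induction n with
  | zero => intro k; simpa using Good.nil k
  | succ m ih =>
    intro k
    rw [List.range'_succ]
    exact Good.single k (ih (k + 1))

lemma eqvgen_cons {a b : List ℕ} (x : ℕ) (h : Relation.EqvGen AdjSwap1 a b) :
    Relation.EqvGen AdjSwap1 (x :: a) (x :: b) := by
  induction h with
  | rel _ _ hr => exact Relation.EqvGen.rel _ _ (adjswap1_cons x hr)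
  | refl _ => exact Relation.EqvGen.refl _
  | symm _ _ _ ih => exact ih.symm
  | trans _ _ _ _ _ ih1 ih2 => exact ih1.trans _ _ _ ih2

lemma eqvgen_reverse {a b : List ℕ} (h : Relation.EqvGen AdjSwap1 a b) :
    Relation.EqvGen AdjSwap1 a.reverse b.reverse := by
  induction h with
  | rel _ _ hr => exact Relation.EqvGen.rel _ _ (adjswap1_reverse hr)
  | refl _ => exact Relation.EqvGen.refl _
  | symm _ _ _ ih => exact ih.symm
  | trans _ _ _ _ _ ih1 ih2 => exact ih1.trans _ _ _ ih2

lemma eqvgen_length {a b : List ℕ} (h : Relation.EqvGen AdjSwap1 a b) :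
    a.length = b.length := by
  induction h with
  | rel _ _ hr => exact adjswap1_length hr
  | refl _ => rfl
  | symm _ _ _ ih => exact ih.symm
  | trans _ _ _ _ _ ih1 ih2 => exact ih1.trans ih2

lemma eqvgen_good_iff {k : ℕ} {a b : List ℕ} (h : Relation.EqvGen AdjSwap1 a b) :
    Good k a ↔ Good k b := by
  induction h with
  | rel _ _ hr => exact ⟨fun hg => good_swap hg hr, fun hg => good_swap hg (adjswap1_symm hr)⟩
  | refl _ => exact Iff.rfl
  | symm _ _ _ ih => exact ih.symm
  | trans _ _ _ _ _ ih1 ih2 => exact ih1.trans ih2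

lemma good_eqvgen {k : ℕ} {w : List ℕ} (h : Good k w) :
    Relation.EqvGen AdjSwap1 (List.range' k w.length) w := by
  induction h with
  | nil k => simpa using Relation.EqvGen.refl ([] : List ℕ)
  | single k hw ih =>
    rw [List.length_cons, List.range'_succ]
    exact eqvgen_cons k ih
  | pair k hw ih =>
    rw [List.length_cons, List.length_cons, List.range'_succ, List.range'_succ]
    exact (Relation.EqvGen.rel _ _ (adjswap1_head k _)).trans _ _ _
      (eqvgen_cons (k + 1) (eqvgen_cons k ih))

/-- The finset of good words starting at value `k` of length `n`. -/
def GS : ℕ → ℕ → Finset (List ℕ)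
  | _, 0 => {[]}
  | k, 1 => {[k]}
  | k, (n + 2) =>
      ((GS (k + 1) (n + 1)).image (k :: ·)) ∪
        ((GS (k + 2) n).image (fun w => (k + 1) :: k :: w))

lemma mem_GS : ∀ (n k : ℕ) (w : List ℕ), w ∈ GS k n ↔ (Good k w ∧ w.length = n) := by
  intro n
  induction n using Nat.strong_induction_on with
  | _ n ih =>
    match n with
    | 0 =>
      intro k w
      simp only [GS, Finset.mem_singleton]
      constructor
      · rintro rfl; exact ⟨Good.nil k, rfl⟩
      · rintro ⟨_, hl⟩; exact List.length_eq_zero_iff.mp hl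
    | 1 =>
      intro k w
      simp only [GS, Finset.mem_singleton]
      constructor
      · rintro rfl; exact ⟨Good.single k (Good.nil _), rfl⟩
      · rintro ⟨hg, hl⟩
        cases hg with
        | nil => simp at hl
        | single _ hw =>
          simp only [List.length_cons, Nat.add_eq_right] at hl
          rw [List.length_eq_zero_iff.mp hl]
        | pair => simp at hl
    | (m + 2) =>
      intro k w
      simp only [GS, Finset.mem_union, Finset.mem_image]
      constructor
      · rintro (⟨w', hw', rfl⟩ | ⟨w', hw', rfl⟩)
        · obtain ⟨hg, hl⟩ := (ih (m + 1) (by omega) (k + 1) w').mp hw'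
          exact ⟨Good.single k hg, by simp [hl]⟩
        · obtain ⟨hg, hl⟩ := (ih m (by omega) (k + 2) w').mp hw'
          exact ⟨Good.pair k hg, by simp [hl]⟩
      · rintro ⟨hg, hl⟩
        cases hg with
        | nil => simp at hl
        | single _ hw =>
          refine Or.inl ⟨_, (ih (m + 1) (by omega) (k + 1) _).mpr ⟨hw, ?_⟩, rfl⟩
          simpa using hl
        | pair _ hw =>
          refine Or.inr ⟨_, (ih m (by omega) (k + 2) _).mpr ⟨hw, ?_⟩, rfl⟩
          simpa using hl

lemma card_GS : ∀ (n k : ℕ), (GS k n).card = Nat.fib (n + 1) := by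
  intro n
  induction n using Nat.strong_induction_on with
  | _ n ih =>
    match n with
    | 0 => intro k; simp [GS]
    | 1 => intro k; simp [GS]
    | (m + 2) =>
      intro k
      have hdisj : Disjoint ((GS (k + 1) (m + 1)).image (k :: ·))
          ((GS (k + 2) m).image (fun w => (k + 1) :: k :: w)) := by
        rw [Finset.disjoint_left]
        rintro a ha hb
        simp only [Finset.mem_image] at ha hb
        obtain ⟨w1, _, rfl⟩ := ha
        obtain ⟨w2, _, heq⟩ := hb
        injection heq with h _
        omega
      have h1 : ((GS (k + 1) (m + 1)).image (k :: ·)).card = Nat.fib (m + 2) := by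
        rw [Finset.card_image_of_injective _ (fun a b h => by injection h),
          ih (m + 1) (by omega)]
      have h2 : ((GS (k + 2) m).image (fun w => (k + 1) :: k :: w)).card = Nat.fib (m + 1) := by
        rw [Finset.card_image_of_injective _
          (fun a b h => by injection h with _ h; injection h), ih m (by omega)]
      have h3 : Nat.fib (m + 2 + 1) = Nat.fib (m + 1) + Nat.fib (m + 2) := by
        rw [show m + 2 + 1 = m + 1 + 2 from rfl]; exact Nat.fib_add_two
      rw [show GS k (m + 2) = _ ∪ _ from rfl, Finset.card_union_of_disjoint hdisj, h1, h2, h3]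
      omega

lemma class_eq (n : ℕ) :
    {v : List ℕ | Relation.EqvGen AdjSwap1 (List.range' 1 n) v} = ↑(GS 1 n) := by
  ext v
  simp only [Set.mem_setOf_eq, Finset.coe_sort_coe, Finset.mem_coe, mem_GS]
  constructor
  · intro h
    refine ⟨(eqvgen_good_iff h).mp (by simpa using good_range' n 1), ?_⟩
    have := eqvgen_length h
    simpa using this.symm
  · rintro ⟨hg, hl⟩
    have := good_eqvgen hg
    rwa [hl] at this

theorem class_card (n : ℕ) :
    Set.ncard {v : List ℕ | Relation.EqvGen AdjSwap1 (List.range' 1 n) v} =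
      Nat.fib (n + 1) := by
  rw [class_eq, Set.ncard_coe_finset, card_GS]

/-- The equivalence class of the identity permutation `1 2 ⋯ n`, and that of its
reverse `n ⋯ 2 1`, under the relation `∼` generated by interchanging adjacent
entries differing by exactly one, both have exactly `F_{n+1}` elements
(the `(n+1)`-st Fibonacci number, with `F₁ = F₂ = 1`). -/
theorem stmt8 (n : ℕ) :
    Set.ncard {v : List ℕ | Relation.EqvGen AdjSwap1 (List.range' 1 n) v} =
        Nat.fib (n + 1) ∧
    Set.ncard {v : List ℕ | Relation.EqvGen AdjSwap1 (List.range' 1 n).reverse v} =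
        Nat.fib (n + 1) := by
  refine ⟨class_card n, ?_⟩
  have himg : {v : List ℕ | Relation.EqvGen AdjSwap1 (List.range' 1 n).reverse v} =
      List.reverse '' {v : List ℕ | Relation.EqvGen AdjSwap1 (List.range' 1 n) v} := by
    ext v
    simp only [Set.mem_setOf_eq, Set.mem_image]
    constructor
    · intro h
      refine ⟨v.reverse, ?_, by simp⟩
      simpa using eqvgen_reverse h
    · rintro ⟨w, hw, rfl⟩
      exact eqvgen_reverse hw
  rw [himg, Set.ncard_image_of_injective _ List.reverse_injective]
  exact class_card n
end
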